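/- arXiv:2509.09773 — 3 statements merged into one kernel-verified Lean document; each statement's English description precedes it below -/
import Mathlib

section
/- Variance comparison with the subbagging limit: under homoscedasticity, with D_half := 1{τ>0} + (1/2)·1{τ=0} (the limiting decision of the subbagging estimator) and D_ad := 1{τ>0} + π₁·1{τ=0}, Var(ψ(D_half, π₁, (μ₁,μ₀))) − Var(ψ(D_ad, π₁, (μ₁,μ₀))) = E[(1/(4·π₁(X)) + 1/(4·(1−π₁(X))) − 1)·σ²(X)·1{τ(X)=0}] ≥ 0. If in addition σ²(X) > 0 almost surely, equality holds if and only if P(π₁(X)=1/2 or τ(X)≠0) = 1. -/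
open MeasureTheory ProbabilityTheory Filter Topology
open scoped Classical

lemma aux_key {Ω : Type*} {m0 : MeasurableSpace Ω} {P : Measure Ω} [IsProbabilityMeasure P]
    {m : MeasurableSpace Ω} (hm : m ≤ m0)
    {f h f' : Ω → ℝ} (hf : StronglyMeasurable[m] f)
    (hfh : Integrable (fun ω => f ω * h ω) P) (hh : Integrable h P)
    (hce : P[h|m] =ᵐ[P] f') :
    ∫ ω, f ω * h ω ∂P = ∫ ω, f ω * f' ω ∂P := by
  haveI : SigmaFinite (P.trim hm) := by
    haveI := isFiniteMeasure_trim (μ := P) hm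
    infer_instance
  rw [← integral_condExp hm (f := fun ω => f ω * h ω)]
  refine integral_congr_ae ?_
  have h1 : P[(fun ω => f ω * h ω)|m] =ᵐ[P] f * P[h|m] :=
    condExp_mul_of_stronglyMeasurable_left hf hfh hh
  filter_upwards [h1, hce] with ω h1 h2
  simp only [h1, Pi.mul_apply, h2]

lemma aux_memL2_bdd_mul {Ω : Type*} [MeasurableSpace Ω] {P : Measure Ω}
    {w v : Ω → ℝ} (hw : AEStronglyMeasurable w P) {C : ℝ} (hbd : ∀ ω, |w ω| ≤ C)
    (hv : MemLp v 2 P) : MemLp (fun ω => w ω * v ω) 2 P := by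
  refine MemLp.of_le_mul (c := C) hv (hw.mul hv.1) (ae_of_all _ fun ω => ?_)
  rw [norm_mul]
  exact mul_le_mul_of_nonneg_right (by simpa using hbd ω) (norm_nonneg _)

lemma aux_memL2_mul_bdd {Ω : Type*} [MeasurableSpace Ω] {P : Measure Ω}
    {w v : Ω → ℝ} (hw : AEStronglyMeasurable w P) {C : ℝ} (hbd : ∀ ω, |w ω| ≤ C)
    (hv : MemLp v 2 P) : MemLp (fun ω => v ω * w ω) 2 P :=
  (aux_memL2_bdd_mul hw hbd hv).ae_eq (ae_of_all _ fun ω => mul_comm _ _)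

lemma aux_int_L2_mul {Ω : Type*} [MeasurableSpace Ω] {P : Measure Ω}
    {u v : Ω → ℝ} (hu : MemLp u 2 P) (hv : MemLp v 2 P) :
    Integrable (fun ω => u ω * v ω) P := by
  have := hv.smul (φ := u) hu (r := 1)
  exact memLp_one_iff_integrable.mp this

lemma aux_int_bdd_mul {Ω : Type*} [MeasurableSpace Ω] {P : Measure Ω}
    {w v : Ω → ℝ} (hv : Integrable v P) (hw : AEStronglyMeasurable w P) {C : ℝ}
    (hbd : ∀ ω, |w ω| ≤ C) : Integrable (fun ω => w ω * v ω) P :=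
  hv.bdd_mul hw (ae_of_all _ fun ω => by simpa using hbd ω)

lemma aux_int_mul_bdd {Ω : Type*} [MeasurableSpace Ω] {P : Measure Ω}
    {w v : Ω → ℝ} (hv : Integrable v P) (hw : AEStronglyMeasurable w P) {C : ℝ}
    (hbd : ∀ ω, |w ω| ≤ C) : Integrable (fun ω => v ω * w ω) P :=
  (aux_int_bdd_mul hv hw hbd).congr (ae_of_all _ fun ω => mul_comm _ _)

/-- AIPW score `ψ(D, p, (m₁, m₀))` evaluated at a sample point `ω`. -/
noncomputable def aipw {Ω 𝒳 : Type*} (X : Ω → 𝒳) (A Y : Ω → ℝ)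
    (D p m₁ m₀ : 𝒳 → ℝ) (ω : Ω) : ℝ :=
  (A ω * D (X ω) + (1 - A ω) * (1 - D (X ω))) /
      (A ω * p (X ω) + (1 - A ω) * (1 - p (X ω))) *
    (Y ω - (A ω * m₁ (X ω) + (1 - A ω) * m₀ (X ω)))
  + D (X ω) * m₁ (X ω) + (1 - D (X ω)) * m₀ (X ω)

set_option maxHeartbeats 2000000 in
/-- Variance comparison with the subbagging limit: under homoscedasticity,
with `D_half = 1{τ>0} + (1/2)·1{τ=0}` (the limiting decision of the subbagging
estimator) and `D_ad = 1{τ>0} + π₁·1{τ=0}` (`τ = μ₁ − μ₀`),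
`Var(ψ(D_half,π₁,(μ₁,μ₀))) − Var(ψ(D_ad,π₁,(μ₁,μ₀)))
 = E[(1/(4π₁(X)) + 1/(4(1−π₁(X))) − 1)·σ²(X)·1{τ(X)=0}] ≥ 0`.
If moreover `σ²(X) > 0` a.s., equality holds iff `P(π₁(X)=1/2 ∨ τ(X)≠0) = 1`. -/
theorem stmt_15 {Ω 𝒳 : Type*} [MeasurableSpace Ω] [MeasurableSpace 𝒳]
    (P : Measure Ω) [IsProbabilityMeasure P]
    (X : Ω → 𝒳) (A Y : Ω → ℝ)
    (hX : Measurable X) (hA : Measurable A) (hY : Measurable Y)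
    (hAbin : ∀ ω, A ω = 0 ∨ A ω = 1) (hYL2 : MemLp Y 2 P)
    (c : ℝ) (hc : c ∈ Set.Ioo (0 : ℝ) (1 / 2))
    (π₁ : 𝒳 → ℝ) (hπ₁m : Measurable π₁) (hπ₁r : ∀ x, π₁ x ∈ Set.Icc c (1 - c))
    (hcondA : P[A | MeasurableSpace.comap X inferInstance]
      =ᵐ[P] fun ω => π₁ (X ω))
    (μ₁ μ₀ : 𝒳 → ℝ) (hμ₁m : Measurable μ₁) (hμ₀m : Measurable μ₀)
    (hμ₁L2 : MemLp (fun ω => μ₁ (X ω)) 2 P) (hμ₀L2 : MemLp (fun ω => μ₀ (X ω)) 2 P)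
    (hcond1 : P[fun ω => A ω * Y ω | MeasurableSpace.comap X inferInstance]
      =ᵐ[P] fun ω => μ₁ (X ω) * π₁ (X ω))
    (hcond0 : P[fun ω => (1 - A ω) * Y ω | MeasurableSpace.comap X inferInstance]
      =ᵐ[P] fun ω => μ₀ (X ω) * (1 - π₁ (X ω)))
    (σ₁sq σ₀sq : 𝒳 → ℝ) (hσ₁m : Measurable σ₁sq) (hσ₀m : Measurable σ₀sq)
    (hσ₁nn : ∀ x, 0 ≤ σ₁sq x) (hσ₀nn : ∀ x, 0 ≤ σ₀sq x)
    (hσ₁L1 : Integrable (fun ω => σ₁sq (X ω)) P)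
    (hσ₀L1 : Integrable (fun ω => σ₀sq (X ω)) P)
    (hcondsq1 : P[fun ω => A ω * Y ω ^ 2 | MeasurableSpace.comap X inferInstance]
      =ᵐ[P] fun ω => (μ₁ (X ω) ^ 2 + σ₁sq (X ω)) * π₁ (X ω))
    (hcondsq0 : P[fun ω => (1 - A ω) * Y ω ^ 2 | MeasurableSpace.comap X inferInstance]
      =ᵐ[P] fun ω => (μ₀ (X ω) ^ 2 + σ₀sq (X ω)) * (1 - π₁ (X ω)))
    (σsq : 𝒳 → ℝ) (hσm : Measurable σsq)
    (hhomo1 : (fun x => σ₁sq x) =ᵐ[Measure.map X P] σsq)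
    (hhomo0 : (fun x => σ₀sq x) =ᵐ[Measure.map X P] σsq)
    (Dhalf : 𝒳 → ℝ)
    (hDhalf : ∀ x, Dhalf x = (if 0 < μ₁ x - μ₀ x then (1 : ℝ) else 0)
      + (1 / 2) * (if μ₁ x - μ₀ x = 0 then (1 : ℝ) else 0))
    (Dad : 𝒳 → ℝ)
    (hDad : ∀ x, Dad x = (if 0 < μ₁ x - μ₀ x then (1 : ℝ) else 0)
      + π₁ x * (if μ₁ x - μ₀ x = 0 then (1 : ℝ) else 0)) :
    (variance (aipw X A Y Dhalf π₁ μ₁ μ₀) P - variance (aipw X A Y Dad π₁ μ₁ μ₀) P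
      = ∫ ω, (1 / (4 * π₁ (X ω)) + 1 / (4 * (1 - π₁ (X ω))) - 1) * σsq (X ω)
          * (if μ₁ (X ω) - μ₀ (X ω) = 0 then (1 : ℝ) else 0) ∂P) ∧
    0 ≤ variance (aipw X A Y Dhalf π₁ μ₁ μ₀) P - variance (aipw X A Y Dad π₁ μ₁ μ₀) P ∧
    ((∀ᵐ ω ∂P, 0 < σsq (X ω)) →
      (variance (aipw X A Y Dhalf π₁ μ₁ μ₀) P = variance (aipw X A Y Dad π₁ μ₁ μ₀) P ↔
        ∀ᵐ ω ∂P, π₁ (X ω) = 1 / 2 ∨ μ₁ (X ω) - μ₀ (X ω) ≠ 0)) := by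
  obtain ⟨hc0, hc2⟩ := hc
  have hm : MeasurableSpace.comap X inferInstance ≤ ‹MeasurableSpace Ω› := hX.comap_le
  -- basic bounds on π₁
  have hπge : ∀ x, c ≤ π₁ x := fun x => (hπ₁r x).1
  have hπle : ∀ x, π₁ x ≤ 1 - c := fun x => (hπ₁r x).2
  have hπpos : ∀ x, 0 < π₁ x := fun x => lt_of_lt_of_le hc0 (hπge x)
  have h1πpos : ∀ x, 0 < 1 - π₁ x := fun x => by have := hπle x; linarith
  have h1πge : ∀ x, c ≤ 1 - π₁ x := fun x => by have := hπle x; linarith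
  have hπne : ∀ x, π₁ x ≠ 0 := fun x => (hπpos x).ne'
  have h1πne : ∀ x, 1 - π₁ x ≠ 0 := fun x => (h1πpos x).ne'
  -- A facts
  have hAabs : ∀ ω, |A ω| ≤ 1 := fun ω => by rcases hAbin ω with h | h <;> simp [h]
  have h1Aabs : ∀ ω, |1 - A ω| ≤ 1 := fun ω => by rcases hAbin ω with h | h <;> simp [h]
  have hAsm : AEStronglyMeasurable A P := hA.aestronglyMeasurable
  have h1Asm : AEStronglyMeasurable (fun ω => 1 - A ω) P :=
    (measurable_const.sub hA).aestronglyMeasurable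
  have hAint : Integrable A P := by
    refine aux_int_bdd_mul (v := fun _ => (1 : ℝ)) (integrable_const 1) hAsm hAabs |>.congr ?_
    exact ae_of_all _ fun ω => by simp
  have h1Aint : Integrable (fun ω => 1 - A ω) P := (integrable_const 1).sub hAint
  -- measurability on the comap σ-algebra
  have hXm : Measurable[MeasurableSpace.comap X inferInstance] X :=
    Measurable.of_comap_le le_rfl
  have hsm : ∀ g : 𝒳 → ℝ, Measurable g →
      StronglyMeasurable[MeasurableSpace.comap X inferInstance] (fun ω => g (X ω)) :=
    fun g hg => (hg.comp hXm).stronglyMeasurable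
  -- integrability of the "h" functions
  have hYint : Integrable Y P := hYL2.integrable one_le_two
  have hYsq : Integrable (fun ω => Y ω ^ 2) P := hYL2.integrable_sq
  have hAY2 : Integrable (fun ω => A ω * Y ω ^ 2) P := aux_int_bdd_mul hYsq hAsm hAabs
  have h1AY2 : Integrable (fun ω => (1 - A ω) * Y ω ^ 2) P := aux_int_bdd_mul hYsq h1Asm h1Aabs
  have hAYL2 : MemLp (fun ω => A ω * Y ω) 2 P := aux_memL2_bdd_mul hAsm hAabs hYL2
  have h1AYL2 : MemLp (fun ω => (1 - A ω) * Y ω) 2 P := aux_memL2_bdd_mul h1Asm h1Aabs hYL2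
  have hAY : Integrable (fun ω => A ω * Y ω) P := hAYL2.integrable one_le_two
  have h1AY : Integrable (fun ω => (1 - A ω) * Y ω) P := h1AYL2.integrable one_le_two
  -- conditional expectation of 1 - A
  have hcondA' : P[(fun ω => 1 - A ω) | MeasurableSpace.comap X inferInstance]
      =ᵐ[P] fun ω => 1 - π₁ (X ω) := by
    haveI : SigmaFinite (P.trim hm) := by
      haveI := isFiniteMeasure_trim (μ := P) hm
      infer_instance
    have hsub : P[(fun _ => (1 : ℝ)) - A | MeasurableSpace.comap X inferInstance]
        =ᵐ[P] P[(fun _ => (1 : ℝ)) | MeasurableSpace.comap X inferInstance]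
          - P[A | MeasurableSpace.comap X inferInstance] :=
      condExp_sub (integrable_const 1) hAint _
    have hconst := condExp_const (μ := P) hm (1 : ℝ)
    have hfun : ((fun _ => (1 : ℝ)) - A) = (fun ω => 1 - A ω) := rfl
    rw [hfun] at hsub
    filter_upwards [hsub, hcondA] with ω h1 h2
    rw [h1, Pi.sub_apply, hconst, h2]
  have hπbd : ∀ ω, |π₁ (X ω)| ≤ 1 := fun ω => by
    have h1 := hπpos (X ω); have h2 := hπle (X ω)
    rw [abs_of_nonneg (by linarith)]; linarith
  have h1πbd : ∀ ω, |1 - π₁ (X ω)| ≤ 1 := fun ω => by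
    have h1 := h1πpos (X ω); have h2 := hπpos (X ω)
    rw [abs_of_nonneg (by linarith)]; linarith
  have hπXsm : AEStronglyMeasurable (fun ω => π₁ (X ω)) P :=
    (hπ₁m.comp hX).aestronglyMeasurable
  have h1πXsm : AEStronglyMeasurable (fun ω => 1 - π₁ (X ω)) P :=
    ((measurable_const.sub hπ₁m).comp hX).aestronglyMeasurable
  -- the main computation, for a generic decision rule D with values in [0,1]
  have hMain : ∀ D : 𝒳 → ℝ, Measurable D → (∀ x, 0 ≤ D x) → (∀ x, D x ≤ 1) →
      MemLp (aipw X A Y D π₁ μ₁ μ₀) 2 P ∧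
      (∫ ω, aipw X A Y D π₁ μ₁ μ₀ ω ∂P
        = ∫ ω, (D (X ω) * μ₁ (X ω) + (1 - D (X ω)) * μ₀ (X ω)) ∂P) ∧
      (∫ ω, (aipw X A Y D π₁ μ₁ μ₀ ω) ^ 2 ∂P
        = ∫ ω, (D (X ω) ^ 2 / π₁ (X ω) * σ₁sq (X ω)
            + (1 - D (X ω)) ^ 2 / (1 - π₁ (X ω)) * σ₀sq (X ω)
            + (D (X ω) * μ₁ (X ω) + (1 - D (X ω)) * μ₀ (X ω)) ^ 2) ∂P) := by
    intro D hDm hD0 hD1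
    have hDabs : ∀ x, |D x| ≤ 1 := fun x => abs_le.mpr ⟨by linarith [hD0 x], hD1 x⟩
    have h1Dabs : ∀ x, |1 - D x| ≤ 1 := fun x => abs_le.mpr ⟨by linarith [hD1 x], by linarith [hD0 x]⟩
    set a : 𝒳 → ℝ := fun x => D x / π₁ x with ha_def
    set b : 𝒳 → ℝ := fun x => (1 - D x) / (1 - π₁ x) with hb_def
    set g : 𝒳 → ℝ := fun x => D x * μ₁ x + (1 - D x) * μ₀ x with hg_def
    set p : 𝒳 → ℝ := fun x => g x - a x * μ₁ x with hp_def
    set q : 𝒳 → ℝ := fun x => g x - b x * μ₀ x with hq_def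
    have ham : Measurable a := hDm.div hπ₁m
    have hbm : Measurable b := (measurable_const.sub hDm).div (measurable_const.sub hπ₁m)
    have hgm : Measurable g := (hDm.mul hμ₁m).add ((measurable_const.sub hDm).mul hμ₀m)
    have hpm : Measurable p := hgm.sub (ham.mul hμ₁m)
    have hqm : Measurable q := hgm.sub (hbm.mul hμ₀m)
    have haC : ∀ x, |a x| ≤ 1 / c := by
      intro x
      rw [ha_def, abs_of_nonneg (div_nonneg (hD0 x) (hπpos x).le)]
      exact div_le_div₀ zero_le_one (hD1 x) hc0 (hπge x)
    have hbC : ∀ x, |b x| ≤ 1 / c := by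
      intro x
      rw [hb_def, abs_of_nonneg (div_nonneg (by linarith [hD1 x]) (h1πpos x).le)]
      exact div_le_div₀ zero_le_one (by linarith [hD0 x]) hc0 (h1πge x)
    have haXC : ∀ ω, |a (X ω)| ≤ 1 / c := fun ω => haC (X ω)
    have hbXC : ∀ ω, |b (X ω)| ≤ 1 / c := fun ω => hbC (X ω)
    have haXsm : AEStronglyMeasurable (fun ω => a (X ω)) P := (ham.comp hX).aestronglyMeasurable
    have hbXsm : AEStronglyMeasurable (fun ω => b (X ω)) P := (hbm.comp hX).aestronglyMeasurable
    -- L² memberships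
    have hgL2 : MemLp (fun ω => g (X ω)) 2 P := by
      have h1 : MemLp (fun ω => D (X ω) * μ₁ (X ω)) 2 P :=
        aux_memL2_bdd_mul ((hDm.comp hX).aestronglyMeasurable) (fun ω => hDabs (X ω)) hμ₁L2
      have h2 : MemLp (fun ω => (1 - D (X ω)) * μ₀ (X ω)) 2 P :=
        aux_memL2_bdd_mul (((measurable_const.sub hDm).comp hX).aestronglyMeasurable)
          (fun ω => h1Dabs (X ω)) hμ₀L2
      exact h1.add h2
    have hpL2 : MemLp (fun ω => p (X ω)) 2 P := by
      have h1 : MemLp (fun ω => a (X ω) * μ₁ (X ω)) 2 P :=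
        aux_memL2_bdd_mul haXsm haXC hμ₁L2
      exact hgL2.sub h1
    have hqL2 : MemLp (fun ω => q (X ω)) 2 P := by
      have h1 : MemLp (fun ω => b (X ω) * μ₀ (X ω)) 2 P :=
        aux_memL2_bdd_mul hbXsm hbXC hμ₀L2
      exact hgL2.sub h1
    have hpXint : Integrable (fun ω => p (X ω)) P := hpL2.integrable one_le_two
    have hqXint : Integrable (fun ω => q (X ω)) P := hqL2.integrable one_le_two
    -- MemLp of the aipw score
    have hrep : ∀ ω, aipw X A Y D π₁ μ₁ μ₀ ω =
        a (X ω) * (A ω * Y ω) + p (X ω) * A ω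
          + b (X ω) * ((1 - A ω) * Y ω) + q (X ω) * (1 - A ω) := by
      intro ω
      rcases hAbin ω with h | h <;>
        · simp only [aipw, h, ha_def, hb_def, hg_def, hp_def, hq_def]
          field_simp
          ring
    have hmem : MemLp (aipw X A Y D π₁ μ₁ μ₀) 2 P := by
      have h1 : MemLp (fun ω => a (X ω) * (A ω * Y ω)) 2 P :=
        aux_memL2_bdd_mul haXsm haXC hAYL2
      have h2 : MemLp (fun ω => p (X ω) * A ω) 2 P :=
        aux_memL2_mul_bdd hAsm hAabs hpL2
      have h3 : MemLp (fun ω => b (X ω) * ((1 - A ω) * Y ω)) 2 P :=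
        aux_memL2_bdd_mul hbXsm hbXC h1AYL2
      have h4 : MemLp (fun ω => q (X ω) * (1 - A ω)) 2 P :=
        aux_memL2_mul_bdd h1Asm h1Aabs hqL2
      exact (((h1.add h2).add h3).add h4).ae_eq (ae_of_all _ fun ω => (hrep ω).symm)
    refine ⟨hmem, ?_, ?_⟩
    -- mean computation
    · have i1 : Integrable (fun ω => a (X ω) * (A ω * Y ω)) P :=
        aux_int_bdd_mul hAY haXsm haXC
      have i2 : Integrable (fun ω => p (X ω) * A ω) P :=
        aux_int_mul_bdd hpXint hAsm hAabs |>.congr (ae_of_all _ fun ω => rfl)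
      have i3 : Integrable (fun ω => b (X ω) * ((1 - A ω) * Y ω)) P :=
        aux_int_bdd_mul h1AY hbXsm hbXC
      have i4 : Integrable (fun ω => q (X ω) * (1 - A ω)) P :=
        aux_int_mul_bdd hqXint h1Asm h1Aabs |>.congr (ae_of_all _ fun ω => rfl)
      have K1 : ∫ ω, a (X ω) * (A ω * Y ω) ∂P
          = ∫ ω, a (X ω) * (μ₁ (X ω) * π₁ (X ω)) ∂P :=
        aux_key hm (hsm a ham) i1 hAY hcond1
      have K2 : ∫ ω, p (X ω) * A ω ∂P = ∫ ω, p (X ω) * π₁ (X ω) ∂P :=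
        aux_key hm (hsm p hpm) i2 hAint hcondA
      have K3 : ∫ ω, b (X ω) * ((1 - A ω) * Y ω) ∂P
          = ∫ ω, b (X ω) * (μ₀ (X ω) * (1 - π₁ (X ω))) ∂P :=
        aux_key hm (hsm b hbm) i3 h1AY hcond0
      have K4 : ∫ ω, q (X ω) * (1 - A ω) ∂P = ∫ ω, q (X ω) * (1 - π₁ (X ω)) ∂P :=
        aux_key hm (hsm q hqm) i4 h1Aint hcondA'
      -- integrability of the images
      have j1 : Integrable (fun ω => a (X ω) * (μ₁ (X ω) * π₁ (X ω))) P := by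
        have : Integrable (fun ω => μ₁ (X ω) * π₁ (X ω)) P :=
          aux_int_mul_bdd (hμ₁L2.integrable one_le_two) hπXsm hπbd
        exact aux_int_bdd_mul this haXsm haXC
      have j2 : Integrable (fun ω => p (X ω) * π₁ (X ω)) P :=
        aux_int_mul_bdd hpXint hπXsm hπbd
      have j3 : Integrable (fun ω => b (X ω) * (μ₀ (X ω) * (1 - π₁ (X ω)))) P := by
        have : Integrable (fun ω => μ₀ (X ω) * (1 - π₁ (X ω))) P :=
          aux_int_mul_bdd (hμ₀L2.integrable one_le_two) h1πXsm h1πbd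
        exact aux_int_bdd_mul this hbXsm hbXC
      have j4 : Integrable (fun ω => q (X ω) * (1 - π₁ (X ω))) P :=
        aux_int_mul_bdd hqXint h1πXsm h1πbd
      have i12 : Integrable (fun ω => a (X ω) * (A ω * Y ω) + p (X ω) * A ω) P := i1.add i2
      have i123 : Integrable (fun ω => a (X ω) * (A ω * Y ω) + p (X ω) * A ω
          + b (X ω) * ((1 - A ω) * Y ω)) P := i12.add i3
      have j12 : Integrable (fun ω => a (X ω) * (μ₁ (X ω) * π₁ (X ω)) + p (X ω) * π₁ (X ω)) P := j1.add j2
      have j123 : Integrable (fun ω => a (X ω) * (μ₁ (X ω) * π₁ (X ω)) + p (X ω) * π₁ (X ω)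
          + b (X ω) * (μ₀ (X ω) * (1 - π₁ (X ω)))) P := j12.add j3
      calc ∫ ω, aipw X A Y D π₁ μ₁ μ₀ ω ∂P
          = ∫ ω, (a (X ω) * (A ω * Y ω) + p (X ω) * A ω
              + b (X ω) * ((1 - A ω) * Y ω) + q (X ω) * (1 - A ω)) ∂P :=
            integral_congr_ae (ae_of_all _ hrep)
        _ = ((∫ ω, a (X ω) * (A ω * Y ω) ∂P) + (∫ ω, p (X ω) * A ω ∂P)
              + (∫ ω, b (X ω) * ((1 - A ω) * Y ω) ∂P)) + (∫ ω, q (X ω) * (1 - A ω) ∂P) := by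
            rw [integral_add i123 i4, integral_add i12 i3, integral_add i1 i2]
        _ = ((∫ ω, a (X ω) * (μ₁ (X ω) * π₁ (X ω)) ∂P) + (∫ ω, p (X ω) * π₁ (X ω) ∂P)
              + (∫ ω, b (X ω) * (μ₀ (X ω) * (1 - π₁ (X ω))) ∂P))
              + (∫ ω, q (X ω) * (1 - π₁ (X ω)) ∂P) := by rw [K1, K2, K3, K4]
        _ = ∫ ω, (a (X ω) * (μ₁ (X ω) * π₁ (X ω)) + p (X ω) * π₁ (X ω)
              + b (X ω) * (μ₀ (X ω) * (1 - π₁ (X ω))) + q (X ω) * (1 - π₁ (X ω))) ∂P := by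
            rw [integral_add j123 j4, integral_add j12 j3, integral_add j1 j2]
        _ = ∫ ω, (D (X ω) * μ₁ (X ω) + (1 - D (X ω)) * μ₀ (X ω)) ∂P := by
            refine integral_congr_ae (ae_of_all _ fun ω => ?_)
            simp only [hp_def, hq_def, hg_def]
            ring
    -- second moment computation
    · have hrepsq : ∀ ω, (aipw X A Y D π₁ μ₁ μ₀ ω) ^ 2 =
          a (X ω) ^ 2 * (A ω * Y ω ^ 2) + (2 * a (X ω) * p (X ω)) * (A ω * Y ω)
            + p (X ω) ^ 2 * A ω
            + b (X ω) ^ 2 * ((1 - A ω) * Y ω ^ 2)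
            + (2 * b (X ω) * q (X ω)) * ((1 - A ω) * Y ω)
            + q (X ω) ^ 2 * (1 - A ω) := by
        intro ω
        rw [hrep ω]
        rcases hAbin ω with h | h <;> · rw [h]; ring
      have hapL2 : MemLp (fun ω => 2 * a (X ω) * p (X ω)) 2 P := by
        have := aux_memL2_bdd_mul haXsm haXC hpL2
        have h2 := this.const_mul (2 : ℝ)
        exact h2.ae_eq (ae_of_all _ fun ω => by ring)
      have hbqL2 : MemLp (fun ω => 2 * b (X ω) * q (X ω)) 2 P := by
        have := aux_memL2_bdd_mul hbXsm hbXC hqL2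
        have h2 := this.const_mul (2 : ℝ)
        exact h2.ae_eq (ae_of_all _ fun ω => by ring)
      have ha2sm : AEStronglyMeasurable (fun ω => a (X ω) ^ 2) P := haXsm.pow 2
      have hb2sm : AEStronglyMeasurable (fun ω => b (X ω) ^ 2) P := hbXsm.pow 2
      have ha2C : ∀ ω, |a (X ω) ^ 2| ≤ (1 / c) ^ 2 := fun ω => by
        rw [abs_pow]; exact pow_le_pow_left₀ (abs_nonneg _) (haXC ω) 2
      have hb2C : ∀ ω, |b (X ω) ^ 2| ≤ (1 / c) ^ 2 := fun ω => by
        rw [abs_pow]; exact pow_le_pow_left₀ (abs_nonneg _) (hbXC ω) 2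
      have i1 : Integrable (fun ω => a (X ω) ^ 2 * (A ω * Y ω ^ 2)) P :=
        aux_int_bdd_mul hAY2 ha2sm ha2C
      have i2 : Integrable (fun ω => (2 * a (X ω) * p (X ω)) * (A ω * Y ω)) P :=
        aux_int_L2_mul hapL2 hAYL2
      have i3 : Integrable (fun ω => p (X ω) ^ 2 * A ω) P :=
        aux_int_mul_bdd hpL2.integrable_sq hAsm hAabs
      have i4 : Integrable (fun ω => b (X ω) ^ 2 * ((1 - A ω) * Y ω ^ 2)) P :=
        aux_int_bdd_mul h1AY2 hb2sm hb2C
      have i5 : Integrable (fun ω => (2 * b (X ω) * q (X ω)) * ((1 - A ω) * Y ω)) P :=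
        aux_int_L2_mul hbqL2 h1AYL2
      have i6 : Integrable (fun ω => q (X ω) ^ 2 * (1 - A ω)) P :=
        aux_int_mul_bdd hqL2.integrable_sq h1Asm h1Aabs
      have K1 : ∫ ω, a (X ω) ^ 2 * (A ω * Y ω ^ 2) ∂P
          = ∫ ω, a (X ω) ^ 2 * ((μ₁ (X ω) ^ 2 + σ₁sq (X ω)) * π₁ (X ω)) ∂P :=
        aux_key hm (hsm (fun x => a x ^ 2) (ham.pow_const 2)) i1 hAY2 hcondsq1
      have K2 : ∫ ω, (2 * a (X ω) * p (X ω)) * (A ω * Y ω) ∂P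
          = ∫ ω, (2 * a (X ω) * p (X ω)) * (μ₁ (X ω) * π₁ (X ω)) ∂P :=
        aux_key hm (hsm (fun x => 2 * a x * p x) (((measurable_const.mul ham).mul hpm))) i2 hAY hcond1
      have K3 : ∫ ω, p (X ω) ^ 2 * A ω ∂P = ∫ ω, p (X ω) ^ 2 * π₁ (X ω) ∂P :=
        aux_key hm (hsm (fun x => p x ^ 2) (hpm.pow_const 2)) i3 hAint hcondA
      have K4 : ∫ ω, b (X ω) ^ 2 * ((1 - A ω) * Y ω ^ 2) ∂P
          = ∫ ω, b (X ω) ^ 2 * ((μ₀ (X ω) ^ 2 + σ₀sq (X ω)) * (1 - π₁ (X ω))) ∂P :=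
        aux_key hm (hsm (fun x => b x ^ 2) (hbm.pow_const 2)) i4 h1AY2 hcondsq0
      have K5 : ∫ ω, (2 * b (X ω) * q (X ω)) * ((1 - A ω) * Y ω) ∂P
          = ∫ ω, (2 * b (X ω) * q (X ω)) * (μ₀ (X ω) * (1 - π₁ (X ω))) ∂P :=
        aux_key hm (hsm (fun x => 2 * b x * q x) (((measurable_const.mul hbm).mul hqm))) i5 h1AY hcond0
      have K6 : ∫ ω, q (X ω) ^ 2 * (1 - A ω) ∂P = ∫ ω, q (X ω) ^ 2 * (1 - π₁ (X ω)) ∂P :=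
        aux_key hm (hsm (fun x => q x ^ 2) (hqm.pow_const 2)) i6 h1Aint hcondA'
      -- integrability of the images
      have hmsq1int : Integrable (fun ω => (μ₁ (X ω) ^ 2 + σ₁sq (X ω)) * π₁ (X ω)) P :=
        aux_int_mul_bdd (hμ₁L2.integrable_sq.add hσ₁L1) hπXsm hπbd
      have hmsq0int : Integrable (fun ω => (μ₀ (X ω) ^ 2 + σ₀sq (X ω)) * (1 - π₁ (X ω))) P :=
        aux_int_mul_bdd (hμ₀L2.integrable_sq.add hσ₀L1) h1πXsm h1πbd
      have j1 : Integrable (fun ω => a (X ω) ^ 2 * ((μ₁ (X ω) ^ 2 + σ₁sq (X ω)) * π₁ (X ω))) P :=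
        aux_int_bdd_mul hmsq1int ha2sm ha2C
      have j2 : Integrable (fun ω => (2 * a (X ω) * p (X ω)) * (μ₁ (X ω) * π₁ (X ω))) P := by
        refine aux_int_L2_mul hapL2 ?_
        exact aux_memL2_mul_bdd hπXsm hπbd hμ₁L2
      have j3 : Integrable (fun ω => p (X ω) ^ 2 * π₁ (X ω)) P :=
        aux_int_mul_bdd hpL2.integrable_sq hπXsm hπbd
      have j4 : Integrable (fun ω => b (X ω) ^ 2 * ((μ₀ (X ω) ^ 2 + σ₀sq (X ω)) * (1 - π₁ (X ω)))) P :=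
        aux_int_bdd_mul hmsq0int hb2sm hb2C
      have j5 : Integrable (fun ω => (2 * b (X ω) * q (X ω)) * (μ₀ (X ω) * (1 - π₁ (X ω)))) P := by
        refine aux_int_L2_mul hbqL2 ?_
        exact aux_memL2_mul_bdd h1πXsm h1πbd hμ₀L2
      have j6 : Integrable (fun ω => q (X ω) ^ 2 * (1 - π₁ (X ω))) P :=
        aux_int_mul_bdd hqL2.integrable_sq h1πXsm h1πbd
      have i12 : Integrable (fun ω => a (X ω) ^ 2 * (A ω * Y ω ^ 2)
          + (2 * a (X ω) * p (X ω)) * (A ω * Y ω)) P := i1.add i2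
      have i123 : Integrable (fun ω => a (X ω) ^ 2 * (A ω * Y ω ^ 2)
          + (2 * a (X ω) * p (X ω)) * (A ω * Y ω) + p (X ω) ^ 2 * A ω) P := i12.add i3
      have i1234 : Integrable (fun ω => a (X ω) ^ 2 * (A ω * Y ω ^ 2)
          + (2 * a (X ω) * p (X ω)) * (A ω * Y ω) + p (X ω) ^ 2 * A ω
          + b (X ω) ^ 2 * ((1 - A ω) * Y ω ^ 2)) P := i123.add i4
      have i12345 : Integrable (fun ω => a (X ω) ^ 2 * (A ω * Y ω ^ 2)
          + (2 * a (X ω) * p (X ω)) * (A ω * Y ω) + p (X ω) ^ 2 * A ω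
          + b (X ω) ^ 2 * ((1 - A ω) * Y ω ^ 2)
          + (2 * b (X ω) * q (X ω)) * ((1 - A ω) * Y ω)) P := i1234.add i5
      have j12 : Integrable (fun ω => a (X ω) ^ 2 * ((μ₁ (X ω) ^ 2 + σ₁sq (X ω)) * π₁ (X ω))
          + (2 * a (X ω) * p (X ω)) * (μ₁ (X ω) * π₁ (X ω))) P := j1.add j2
      have j123 : Integrable (fun ω => a (X ω) ^ 2 * ((μ₁ (X ω) ^ 2 + σ₁sq (X ω)) * π₁ (X ω))
          + (2 * a (X ω) * p (X ω)) * (μ₁ (X ω) * π₁ (X ω)) + p (X ω) ^ 2 * π₁ (X ω)) P := j12.add j3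
      have j1234 : Integrable (fun ω => a (X ω) ^ 2 * ((μ₁ (X ω) ^ 2 + σ₁sq (X ω)) * π₁ (X ω))
          + (2 * a (X ω) * p (X ω)) * (μ₁ (X ω) * π₁ (X ω)) + p (X ω) ^ 2 * π₁ (X ω)
          + b (X ω) ^ 2 * ((μ₀ (X ω) ^ 2 + σ₀sq (X ω)) * (1 - π₁ (X ω)))) P := j123.add j4
      have j12345 : Integrable (fun ω => a (X ω) ^ 2 * ((μ₁ (X ω) ^ 2 + σ₁sq (X ω)) * π₁ (X ω))
          + (2 * a (X ω) * p (X ω)) * (μ₁ (X ω) * π₁ (X ω)) + p (X ω) ^ 2 * π₁ (X ω)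
          + b (X ω) ^ 2 * ((μ₀ (X ω) ^ 2 + σ₀sq (X ω)) * (1 - π₁ (X ω)))
          + (2 * b (X ω) * q (X ω)) * (μ₀ (X ω) * (1 - π₁ (X ω)))) P := j1234.add j5
      calc ∫ ω, (aipw X A Y D π₁ μ₁ μ₀ ω) ^ 2 ∂P
          = ∫ ω, (a (X ω) ^ 2 * (A ω * Y ω ^ 2) + (2 * a (X ω) * p (X ω)) * (A ω * Y ω)
              + p (X ω) ^ 2 * A ω + b (X ω) ^ 2 * ((1 - A ω) * Y ω ^ 2)
              + (2 * b (X ω) * q (X ω)) * ((1 - A ω) * Y ω)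
              + q (X ω) ^ 2 * (1 - A ω)) ∂P := integral_congr_ae (ae_of_all _ hrepsq)
        _ = (((((∫ ω, a (X ω) ^ 2 * (A ω * Y ω ^ 2) ∂P)
              + ∫ ω, (2 * a (X ω) * p (X ω)) * (A ω * Y ω) ∂P)
              + ∫ ω, p (X ω) ^ 2 * A ω ∂P)
              + ∫ ω, b (X ω) ^ 2 * ((1 - A ω) * Y ω ^ 2) ∂P)
              + ∫ ω, (2 * b (X ω) * q (X ω)) * ((1 - A ω) * Y ω) ∂P)
              + ∫ ω, q (X ω) ^ 2 * (1 - A ω) ∂P := by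
            rw [integral_add i12345 i6, integral_add i1234 i5, integral_add i123 i4,
              integral_add i12 i3, integral_add i1 i2]
        _ = (((((∫ ω, a (X ω) ^ 2 * ((μ₁ (X ω) ^ 2 + σ₁sq (X ω)) * π₁ (X ω)) ∂P)
              + ∫ ω, (2 * a (X ω) * p (X ω)) * (μ₁ (X ω) * π₁ (X ω)) ∂P)
              + ∫ ω, p (X ω) ^ 2 * π₁ (X ω) ∂P)
              + ∫ ω, b (X ω) ^ 2 * ((μ₀ (X ω) ^ 2 + σ₀sq (X ω)) * (1 - π₁ (X ω))) ∂P)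
              + ∫ ω, (2 * b (X ω) * q (X ω)) * (μ₀ (X ω) * (1 - π₁ (X ω))) ∂P)
              + ∫ ω, q (X ω) ^ 2 * (1 - π₁ (X ω)) ∂P := by
            rw [K1, K2, K3, K4, K5, K6]
        _ = ∫ ω, (a (X ω) ^ 2 * ((μ₁ (X ω) ^ 2 + σ₁sq (X ω)) * π₁ (X ω))
              + (2 * a (X ω) * p (X ω)) * (μ₁ (X ω) * π₁ (X ω))
              + p (X ω) ^ 2 * π₁ (X ω)
              + b (X ω) ^ 2 * ((μ₀ (X ω) ^ 2 + σ₀sq (X ω)) * (1 - π₁ (X ω)))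
              + (2 * b (X ω) * q (X ω)) * (μ₀ (X ω) * (1 - π₁ (X ω)))
              + q (X ω) ^ 2 * (1 - π₁ (X ω))) ∂P := by
            rw [integral_add j12345 j6, integral_add j1234 j5, integral_add j123 j4,
              integral_add j12 j3, integral_add j1 j2]
        _ = ∫ ω, (D (X ω) ^ 2 / π₁ (X ω) * σ₁sq (X ω)
              + (1 - D (X ω)) ^ 2 / (1 - π₁ (X ω)) * σ₀sq (X ω)
              + (D (X ω) * μ₁ (X ω) + (1 - D (X ω)) * μ₀ (X ω)) ^ 2) ∂P := by
            refine integral_congr_ae (ae_of_all _ fun ω => ?_)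
            simp only [hp_def, hq_def, hg_def, ha_def, hb_def]
            have h1 := hπne (X ω)
            have h2 := h1πne (X ω)
            field_simp
            ring
  -- properties of the two decision rules
  have hτm : Measurable fun x => μ₁ x - μ₀ x := hμ₁m.sub hμ₀m
  have hs1 : MeasurableSet {x : 𝒳 | 0 < μ₁ x - μ₀ x} := measurableSet_lt measurable_const hτm
  have hs2 : MeasurableSet {x : 𝒳 | μ₁ x - μ₀ x = 0} := hτm (measurableSet_singleton 0)
  have hDhm : Measurable Dhalf := by
    have : Dhalf = fun x => (if 0 < μ₁ x - μ₀ x then (1 : ℝ) else 0)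
        + (1 / 2) * (if μ₁ x - μ₀ x = 0 then (1 : ℝ) else 0) := funext hDhalf
    rw [this]
    exact (Measurable.ite hs1 measurable_const measurable_const).add
      ((Measurable.ite hs2 measurable_const measurable_const).const_mul _)
  have hDam : Measurable Dad := by
    have : Dad = fun x => (if 0 < μ₁ x - μ₀ x then (1 : ℝ) else 0)
        + π₁ x * (if μ₁ x - μ₀ x = 0 then (1 : ℝ) else 0) := funext hDad
    rw [this]
    exact (Measurable.ite hs1 measurable_const measurable_const).add
      (hπ₁m.mul (Measurable.ite hs2 measurable_const measurable_const))
  have hDh0 : ∀ x, 0 ≤ Dhalf x := by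
    intro x; rw [hDhalf]; split_ifs <;> norm_num
  have hDh1 : ∀ x, Dhalf x ≤ 1 := by
    intro x; rw [hDhalf]; split_ifs with h1 h2 <;> first | linarith | norm_num
  have hDa0 : ∀ x, 0 ≤ Dad x := by
    intro x; rw [hDad]; have := hπpos x
    split_ifs <;> nlinarith
  have hDa1 : ∀ x, Dad x ≤ 1 := by
    intro x; rw [hDad]; have h1 := hπpos x; have h2 := hπle x
    split_ifs with ha hb <;> first | linarith | nlinarith
  -- the "g" parts coincide
  have hg_eq : ∀ x, Dhalf x * μ₁ x + (1 - Dhalf x) * μ₀ x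
      = Dad x * μ₁ x + (1 - Dad x) * μ₀ x := by
    intro x
    by_cases h : μ₁ x - μ₀ x = 0
    · have hμeq : μ₁ x = μ₀ x := by linarith
      rw [hμeq]; ring
    · rw [hDhalf, hDad]; simp [h]
  obtain ⟨hMemh, hMeanh, hSqh⟩ := hMain Dhalf hDhm hDh0 hDh1
  obtain ⟨hMema, hMeana, hSqa⟩ := hMain Dad hDam hDa0 hDa1
  -- variance formulas
  have hvarh : variance (aipw X A Y Dhalf π₁ μ₁ μ₀) P
      = (∫ ω, (aipw X A Y Dhalf π₁ μ₁ μ₀ ω) ^ 2 ∂P)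
        - (∫ ω, aipw X A Y Dhalf π₁ μ₁ μ₀ ω ∂P) ^ 2 := by
    rw [variance_eq_sub hMemh]; rfl
  have hvara : variance (aipw X A Y Dad π₁ μ₁ μ₀) P
      = (∫ ω, (aipw X A Y Dad π₁ μ₁ μ₀ ω) ^ 2 ∂P)
        - (∫ ω, aipw X A Y Dad π₁ μ₁ μ₀ ω ∂P) ^ 2 := by
    rw [variance_eq_sub hMema]; rfl
  -- means coincide
  have hmean_eq : ∫ ω, aipw X A Y Dhalf π₁ μ₁ μ₀ ω ∂P = ∫ ω, aipw X A Y Dad π₁ μ₁ μ₀ ω ∂P := by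
    rw [hMeanh, hMeana]
    exact integral_congr_ae (ae_of_all _ fun ω => hg_eq (X ω))
  -- integrability of the two second-moment integrands
  have hIntSq : ∀ D : 𝒳 → ℝ, Measurable D → (∀ x, 0 ≤ D x) → (∀ x, D x ≤ 1) →
      Integrable (fun ω => D (X ω) ^ 2 / π₁ (X ω) * σ₁sq (X ω)
        + (1 - D (X ω)) ^ 2 / (1 - π₁ (X ω)) * σ₀sq (X ω)
        + (D (X ω) * μ₁ (X ω) + (1 - D (X ω)) * μ₀ (X ω)) ^ 2) P := by
    intro D hDm hD0 hD1
    have hDabs : ∀ x, |D x| ≤ 1 := fun x => abs_le.mpr ⟨by linarith [hD0 x], hD1 x⟩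
    have h1Dabs : ∀ x, |1 - D x| ≤ 1 := fun x => abs_le.mpr ⟨by linarith [hD1 x], by linarith [hD0 x]⟩
    have hw1 : ∀ ω, |D (X ω) ^ 2 / π₁ (X ω)| ≤ 1 / c := by
      intro ω
      rw [abs_of_nonneg (div_nonneg (sq_nonneg _) (hπpos _).le)]
      refine div_le_div₀ zero_le_one ?_ hc0 (hπge _)
      have := hDabs (X ω); nlinarith [abs_nonneg (D (X ω)), neg_abs_le (D (X ω)), le_abs_self (D (X ω))]
    have hw0 : ∀ ω, |(1 - D (X ω)) ^ 2 / (1 - π₁ (X ω))| ≤ 1 / c := by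
      intro ω
      rw [abs_of_nonneg (div_nonneg (sq_nonneg _) (h1πpos _).le)]
      refine div_le_div₀ zero_le_one ?_ hc0 (h1πge _)
      have := h1Dabs (X ω); nlinarith [neg_abs_le (1 - D (X ω)), le_abs_self (1 - D (X ω))]
    have h1 : Integrable (fun ω => D (X ω) ^ 2 / π₁ (X ω) * σ₁sq (X ω)) P :=
      aux_int_bdd_mul hσ₁L1 (((hDm.pow_const 2).div hπ₁m).comp hX).aestronglyMeasurable hw1
    have h2 : Integrable (fun ω => (1 - D (X ω)) ^ 2 / (1 - π₁ (X ω)) * σ₀sq (X ω)) P :=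
      aux_int_bdd_mul hσ₀L1
        ((((measurable_const.sub hDm).pow_const 2).div (measurable_const.sub hπ₁m)).comp hX).aestronglyMeasurable hw0
    have hgL2 : MemLp (fun ω => D (X ω) * μ₁ (X ω) + (1 - D (X ω)) * μ₀ (X ω)) 2 P := by
      have ha : MemLp (fun ω => D (X ω) * μ₁ (X ω)) 2 P :=
        aux_memL2_bdd_mul ((hDm.comp hX).aestronglyMeasurable) (fun ω => hDabs (X ω)) hμ₁L2
      have hb : MemLp (fun ω => (1 - D (X ω)) * μ₀ (X ω)) 2 P :=
        aux_memL2_bdd_mul (((measurable_const.sub hDm).comp hX).aestronglyMeasurable)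
          (fun ω => h1Dabs (X ω)) hμ₀L2
      exact ha.add hb
    exact (h1.add h2).add hgL2.integrable_sq
  have hInth := hIntSq Dhalf hDhm hDh0 hDh1
  have hInta := hIntSq Dad hDam hDa0 hDa1
  -- pull back the homoscedasticity along X
  have hae1 : ∀ᵐ ω ∂P, σ₁sq (X ω) = σsq (X ω) := by
    have h : ∀ᵐ x ∂(Measure.map X P), x ∈ {x : 𝒳 | σ₁sq x = σsq x} := hhomo1
    exact (ae_map_iff hX.aemeasurable (measurableSet_eq_fun hσ₁m hσm)).mp h
  have hae0 : ∀ᵐ ω ∂P, σ₀sq (X ω) = σsq (X ω) := by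
    have h : ∀ᵐ x ∂(Measure.map X P), x ∈ {x : 𝒳 | σ₀sq x = σsq x} := hhomo0
    exact (ae_map_iff hX.aemeasurable (measurableSet_eq_fun hσ₀m hσm)).mp h
  -- values of the decision rules on {τ = 0} and {τ ≠ 0}
  have hDh_half : ∀ x, μ₁ x - μ₀ x = 0 → Dhalf x = 1 / 2 := by
    intro x h; rw [hDhalf]; simp [h]
  have hDa_pi : ∀ x, μ₁ x - μ₀ x = 0 → Dad x = π₁ x := by
    intro x h; rw [hDad]; simp [h]
  have hDeq : ∀ x, μ₁ x - μ₀ x ≠ 0 → Dhalf x = Dad x := by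
    intro x h; rw [hDhalf, hDad]; simp [h]
  -- the main difference identity
  have hmain_eq : variance (aipw X A Y Dhalf π₁ μ₁ μ₀) P - variance (aipw X A Y Dad π₁ μ₁ μ₀) P
      = ∫ ω, (1 / (4 * π₁ (X ω)) + 1 / (4 * (1 - π₁ (X ω))) - 1) * σsq (X ω)
          * (if μ₁ (X ω) - μ₀ (X ω) = 0 then (1 : ℝ) else 0) ∂P := by
    rw [hvarh, hvara, hmean_eq, hSqh, hSqa]
    have hsub : (∫ ω, (Dhalf (X ω) ^ 2 / π₁ (X ω) * σ₁sq (X ω)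
          + (1 - Dhalf (X ω)) ^ 2 / (1 - π₁ (X ω)) * σ₀sq (X ω)
          + (Dhalf (X ω) * μ₁ (X ω) + (1 - Dhalf (X ω)) * μ₀ (X ω)) ^ 2) ∂P)
        - (∫ ω, (Dad (X ω) ^ 2 / π₁ (X ω) * σ₁sq (X ω)
          + (1 - Dad (X ω)) ^ 2 / (1 - π₁ (X ω)) * σ₀sq (X ω)
          + (Dad (X ω) * μ₁ (X ω) + (1 - Dad (X ω)) * μ₀ (X ω)) ^ 2) ∂P)
        = ∫ ω, ((Dhalf (X ω) ^ 2 / π₁ (X ω) * σ₁sq (X ω)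
          + (1 - Dhalf (X ω)) ^ 2 / (1 - π₁ (X ω)) * σ₀sq (X ω)
          + (Dhalf (X ω) * μ₁ (X ω) + (1 - Dhalf (X ω)) * μ₀ (X ω)) ^ 2)
          - (Dad (X ω) ^ 2 / π₁ (X ω) * σ₁sq (X ω)
          + (1 - Dad (X ω)) ^ 2 / (1 - π₁ (X ω)) * σ₀sq (X ω)
          + (Dad (X ω) * μ₁ (X ω) + (1 - Dad (X ω)) * μ₀ (X ω)) ^ 2)) ∂P :=
      (integral_sub hInth hInta).symm
    rw [sub_sub_sub_cancel_right, hsub]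
    refine integral_congr_ae ?_
    filter_upwards [hae1, hae0] with ω e1 e0
    rw [e1, e0, ← hg_eq (X ω)]
    by_cases h : μ₁ (X ω) - μ₀ (X ω) = 0
    · rw [hDh_half _ h, hDa_pi _ h]
      simp only [h, if_pos rfl, if_true]
      have h1 := hπne (X ω)
      have h2 := h1πne (X ω)
      field_simp
      ring
    · rw [hDeq _ h]
      simp only [if_neg h, mul_zero]
      ring
  -- nonnegativity of the coefficient
  have hco : ∀ x, 0 ≤ 1 / (4 * π₁ x) + 1 / (4 * (1 - π₁ x)) - 1 := by
    intro x
    have h1 := hπpos x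
    have h2 := h1πpos x
    have hkey : 1 / (4 * π₁ x) + 1 / (4 * (1 - π₁ x)) - 1
        = (2 * π₁ x - 1) ^ 2 / (4 * π₁ x * (1 - π₁ x)) := by
      field_simp
      ring
    rw [hkey]
    positivity
  have hnn : ∀ᵐ ω ∂P, 0 ≤ (1 / (4 * π₁ (X ω)) + 1 / (4 * (1 - π₁ (X ω))) - 1) * σsq (X ω)
      * (if μ₁ (X ω) - μ₀ (X ω) = 0 then (1 : ℝ) else 0) := by
    filter_upwards [hae1] with ω e1
    have hσnn : 0 ≤ σsq (X ω) := e1 ▸ hσ₁nn (X ω)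
    have hind : 0 ≤ (if μ₁ (X ω) - μ₀ (X ω) = 0 then (1 : ℝ) else 0) := by positivity
    exact mul_nonneg (mul_nonneg (hco (X ω)) hσnn) hind
  refine ⟨hmain_eq, ?_, ?_⟩
  · rw [hmain_eq]
    exact integral_nonneg_of_ae hnn
  · intro hpos
    -- integrability of the target integrand
    have hTi : Integrable (fun ω => (1 / (4 * π₁ (X ω)) + 1 / (4 * (1 - π₁ (X ω))) - 1) * σsq (X ω)
        * (if μ₁ (X ω) - μ₀ (X ω) = 0 then (1 : ℝ) else 0)) P := by
      have hwm : Measurable fun x => (1 / (4 * π₁ x) + 1 / (4 * (1 - π₁ x)) - 1)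
          * (if μ₁ x - μ₀ x = 0 then (1 : ℝ) else 0) := by
        refine Measurable.mul ?_ (Measurable.ite hs2 measurable_const measurable_const)
        exact ((measurable_const.div (hπ₁m.const_mul 4)).add
          (measurable_const.div ((measurable_const.sub hπ₁m).const_mul 4))).sub measurable_const
      have hwbd : ∀ ω, |(1 / (4 * π₁ (X ω)) + 1 / (4 * (1 - π₁ (X ω))) - 1)
          * (if μ₁ (X ω) - μ₀ (X ω) = 0 then (1 : ℝ) else 0)| ≤ 1 / (4 * c) + 1 / (4 * c) + 1 := by
        intro ω
        have h1 := hπpos (X ω); have h2 := h1πpos (X ω)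
        have hb1 : 1 / (4 * π₁ (X ω)) ≤ 1 / (4 * c) :=
          one_div_le_one_div_of_le (by linarith) (by linarith [hπge (X ω)])
        have hb2 : 1 / (4 * (1 - π₁ (X ω))) ≤ 1 / (4 * c) :=
          one_div_le_one_div_of_le (by linarith) (by linarith [h1πge (X ω)])
        have hp1 : 0 < 1 / (4 * π₁ (X ω)) := by positivity
        have hp2 : 0 < 1 / (4 * (1 - π₁ (X ω))) := by positivity
        rw [abs_mul]
        have hic : |(if μ₁ (X ω) - μ₀ (X ω) = 0 then (1 : ℝ) else 0)| ≤ 1 := by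
          split_ifs <;> norm_num
        calc |1 / (4 * π₁ (X ω)) + 1 / (4 * (1 - π₁ (X ω))) - 1|
              * |(if μ₁ (X ω) - μ₀ (X ω) = 0 then (1 : ℝ) else 0)|
            ≤ |1 / (4 * π₁ (X ω)) + 1 / (4 * (1 - π₁ (X ω))) - 1| * 1 :=
              mul_le_mul_of_nonneg_left hic (abs_nonneg _)
          _ ≤ 1 / (4 * c) + 1 / (4 * c) + 1 := by
              rw [mul_one, abs_le]
              constructor <;> nlinarith
      have hint : Integrable (fun ω => ((1 / (4 * π₁ (X ω)) + 1 / (4 * (1 - π₁ (X ω))) - 1)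
          * (if μ₁ (X ω) - μ₀ (X ω) = 0 then (1 : ℝ) else 0)) * σ₁sq (X ω)) P :=
        aux_int_bdd_mul hσ₁L1 ((hwm.comp hX).aestronglyMeasurable) hwbd
      refine hint.congr ?_
      filter_upwards [hae1] with ω e1
      rw [e1]; ring
    rw [← sub_eq_zero, hmain_eq]
    rw [integral_eq_zero_iff_of_nonneg_ae hnn hTi]
    constructor
    · intro h
      filter_upwards [h, hpos] with ω h0 hp
      by_cases hτ : μ₁ (X ω) - μ₀ (X ω) = 0
      · left
        rw [if_pos hτ, mul_one] at h0
        have hc0' : 1 / (4 * π₁ (X ω)) + 1 / (4 * (1 - π₁ (X ω))) - 1 = 0 := by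
          rcases mul_eq_zero.mp h0 with h | h
          · exact h
          · exact absurd h hp.ne'
        have h1 := hπpos (X ω); have h2 := h1πpos (X ω)
        have hkey : (2 * π₁ (X ω) - 1) ^ 2 / (4 * π₁ (X ω) * (1 - π₁ (X ω))) = 0 := by
          rw [show (2 * π₁ (X ω) - 1) ^ 2 / (4 * π₁ (X ω) * (1 - π₁ (X ω)))
              = 1 / (4 * π₁ (X ω)) + 1 / (4 * (1 - π₁ (X ω))) - 1 by field_simp; ring]
          exact hc0'
        have hnum : (2 * π₁ (X ω) - 1) ^ 2 = 0 := by
          have hden : 4 * π₁ (X ω) * (1 - π₁ (X ω)) ≠ 0 := by positivity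
          exact (div_eq_zero_iff.mp hkey).resolve_right hden
        have := pow_eq_zero_iff (n := 2) (by norm_num) |>.mp hnum
        linarith
      · right; exact hτ
    · intro h
      filter_upwards [h] with ω hd
      rcases hd with hd | hd
      · rw [Pi.zero_apply, hd]
        norm_num
      · rw [Pi.zero_apply, if_neg hd, mul_zero]
end

section
/- Efficiency optimality of the adaptive-smoothing influence function among unbiased AIPW scores: under homoscedasticity, for every measurable D:𝒳→[0,1] with V(D)=V₀ (equivalently, D=1 a.e. on {τ(X)>0} and D=0 a.e. on {τ(X)<0}), one has Var(ψ(D, π₁, (μ₁,μ₀))) ≥ Var(ψ(D_ad, π₁, (μ₁,μ₀))), where D_ad := 1{τ>0} + π₁·1{τ=0}. Hence the infimum of Var(ψ(D, π₁, (μ₁,μ₀))) over all such D equals Var(d₀(X)·μ₁(X)+(1−d₀(X))·μ₀(X)) + E[σ²(X)·(1{τ(X)>0}/π₁(X) + 1{τ(X)<0}/(1−π₁(X)))] + E[σ²(X)·1{τ(X)=0}] and is attained at D = D_ad. -/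
open MeasureTheory ProbabilityTheory Filter Topology
open scoped Classical

private lemma l2mul {Ω : Type*} [MeasurableSpace Ω] {P : Measure Ω} {f g : Ω → ℝ}
    (hf : MemLp f 2 P) (hg : MemLp g 2 P) : Integrable (fun ω => f ω * g ω) P := by
  have h : MemLp (f • g) 1 P := hg.smul hf
  rw [memLp_one_iff_integrable] at h
  exact h

private lemma bddmul {Ω : Type*} [MeasurableSpace Ω] {P : Measure Ω} {b f : Ω → ℝ}
    (hb : AEStronglyMeasurable b P) (C : ℝ) (hC : ∀ ω, |b ω| ≤ C) (hf : Integrable f P) :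
    Integrable (fun ω => b ω * f ω) P :=
  hf.bdd_mul (c := C) hb (Eventually.of_forall fun ω => by simpa using hC ω)

private lemma bddmulL2 {Ω : Type*} [MeasurableSpace Ω] {P : Measure Ω} {b f : Ω → ℝ}
    (hb : AEStronglyMeasurable b P) (C : ℝ) (hC : ∀ ω, |b ω| ≤ C) (hf : MemLp f 2 P) :
    MemLp (fun ω => b ω * f ω) 2 P :=
  MemLp.of_le_mul hf (hb.mul hf.1) (Eventually.of_forall fun ω => by
    simp only [norm_mul, Real.norm_eq_abs]
    exact mul_le_mul_of_nonneg_right (hC ω) (abs_nonneg _))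

private lemma abs_mul_le' {a b Ca Cb : ℝ} (ha : |a| ≤ Ca) (hb : |b| ≤ Cb) : |a * b| ≤ Ca * Cb := by
  rw [abs_mul]; exact mul_le_mul ha hb (abs_nonneg _) (le_trans (abs_nonneg _) ha)

private lemma ce_int {Ω 𝒳 : Type*} [MeasurableSpace Ω] [MeasurableSpace 𝒳]
    {P : Measure Ω} [IsProbabilityMeasure P] {X : Ω → 𝒳} (hX : Measurable X)
    {f : Ω → ℝ} (hf : Integrable f P) {g r : 𝒳 → ℝ} (hg : Measurable g)
    (hgf : Integrable (fun ω => g (X ω) * f ω) P)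
    (hr : P[f | MeasurableSpace.comap X inferInstance] =ᵐ[P] fun ω => r (X ω)) :
    ∫ ω, g (X ω) * f ω ∂P = ∫ ω, g (X ω) * r (X ω) ∂P := by
  have hm : MeasurableSpace.comap X inferInstance ≤ (inferInstance : MeasurableSpace Ω) :=
    hX.comap_le
  have hXm : Measurable[MeasurableSpace.comap X inferInstance] X := fun s hs => ⟨s, hs, rfl⟩
  have hgm : StronglyMeasurable[MeasurableSpace.comap X inferInstance] (fun ω => g (X ω)) :=
    (hg.comp hXm).stronglyMeasurable
  have h1 : ∫ ω, g (X ω) * f ω ∂P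
      = ∫ ω, (P[fun ω => g (X ω) * f ω | MeasurableSpace.comap X inferInstance]) ω ∂P :=
    (integral_condExp hm).symm
  have h2 : P[fun ω => g (X ω) * f ω | MeasurableSpace.comap X inferInstance]
      =ᵐ[P] fun ω => g (X ω) * (P[f | MeasurableSpace.comap X inferInstance]) ω := by
    have := condExp_mul_of_stronglyMeasurable_left (μ := P) hgm (by exact hgf) hf
    exact this
  rw [h1, integral_congr_ae h2]
  refine integral_congr_ae ?_
  filter_upwards [hr] with ω h
  rw [h]

private lemma int_sub_add {Ω : Type*} [MeasurableSpace Ω] {P : Measure Ω} {f a b c : Ω → ℝ}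
    (ha : Integrable a P) (hb : Integrable b P) (hc : Integrable c P)
    (hpt : ∀ ω, f ω = a ω - b ω + c ω) :
    ∫ ω, f ω ∂P = (∫ ω, a ω ∂P) - (∫ ω, b ω ∂P) + ∫ ω, c ω ∂P :=
  calc ∫ ω, f ω ∂P = ∫ ω, (a ω - b ω) + c ω ∂P := integral_congr_ae (Eventually.of_forall hpt)
    _ = (∫ ω, a ω - b ω ∂P) + ∫ ω, c ω ∂P := integral_add (ha.sub hb) hc
    _ = (∫ ω, a ω ∂P) - (∫ ω, b ω ∂P) + ∫ ω, c ω ∂P := by rw [integral_sub ha hb]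

private lemma int_add3 {Ω : Type*} [MeasurableSpace Ω] {P : Measure Ω} {f a b c : Ω → ℝ}
    (ha : Integrable a P) (hb : Integrable b P) (hc : Integrable c P)
    (hpt : ∀ ω, f ω = a ω + b ω + c ω) :
    ∫ ω, f ω ∂P = (∫ ω, a ω ∂P) + (∫ ω, b ω ∂P) + ∫ ω, c ω ∂P :=
  calc ∫ ω, f ω ∂P = ∫ ω, (a ω + b ω) + c ω ∂P := integral_congr_ae (Eventually.of_forall hpt)
    _ = (∫ ω, a ω + b ω ∂P) + ∫ ω, c ω ∂P := integral_add (ha.add hb) hc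
    _ = _ := by rw [integral_add ha hb]

private lemma int_add5 {Ω : Type*} [MeasurableSpace Ω] {P : Measure Ω} {f a b c d e : Ω → ℝ}
    (ha : Integrable a P) (hb : Integrable b P) (hc : Integrable c P)
    (hd : Integrable d P) (he : Integrable e P)
    (hpt : ∀ ω, f ω = a ω + b ω + c ω + d ω + e ω) :
    ∫ ω, f ω ∂P = (∫ ω, a ω ∂P) + (∫ ω, b ω ∂P) + (∫ ω, c ω ∂P)
      + (∫ ω, d ω ∂P) + ∫ ω, e ω ∂P := by
  have e0 : ∫ ω, f ω ∂P = ∫ ω, a ω + b ω + c ω + d ω + e ω ∂P :=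
    integral_congr_ae (Eventually.of_forall hpt)
  have e4 : ∫ ω, a ω + b ω + c ω + d ω + e ω ∂P
      = (∫ ω, a ω + b ω + c ω + d ω ∂P) + ∫ ω, e ω ∂P :=
    integral_add (((ha.add hb).add hc).add hd) he
  have e3 : ∫ ω, a ω + b ω + c ω + d ω ∂P
      = (∫ ω, a ω + b ω + c ω ∂P) + ∫ ω, d ω ∂P :=
    integral_add ((ha.add hb).add hc) hd
  have e2 : ∫ ω, a ω + b ω + c ω ∂P = (∫ ω, a ω + b ω ∂P) + ∫ ω, c ω ∂P :=
    integral_add (ha.add hb) hc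
  have e1 : ∫ ω, a ω + b ω ∂P = (∫ ω, a ω ∂P) + ∫ ω, b ω ∂P := integral_add ha hb
  rw [e0, e4, e3, e2, e1]

private lemma aipw_moments {Ω 𝒳 : Type*} [MeasurableSpace Ω] [MeasurableSpace 𝒳]
    (P : Measure Ω) [IsProbabilityMeasure P]
    (X : Ω → 𝒳) (A Y : Ω → ℝ)
    (hX : Measurable X) (hA : Measurable A) (hY : Measurable Y)
    (hAbin : ∀ ω, A ω = 0 ∨ A ω = 1) (hYL2 : MemLp Y 2 P)
    (c : ℝ) (hc : c ∈ Set.Ioo (0 : ℝ) (1 / 2))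
    (π₁ : 𝒳 → ℝ) (hπ₁m : Measurable π₁) (hπ₁r : ∀ x, π₁ x ∈ Set.Icc c (1 - c))
    (hcondA : P[A | MeasurableSpace.comap X inferInstance] =ᵐ[P] fun ω => π₁ (X ω))
    (μ₁ μ₀ : 𝒳 → ℝ) (hμ₁m : Measurable μ₁) (hμ₀m : Measurable μ₀)
    (hμ₁L2 : MemLp (fun ω => μ₁ (X ω)) 2 P) (hμ₀L2 : MemLp (fun ω => μ₀ (X ω)) 2 P)
    (hcond1 : P[fun ω => A ω * Y ω | MeasurableSpace.comap X inferInstance]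
      =ᵐ[P] fun ω => μ₁ (X ω) * π₁ (X ω))
    (hcond0 : P[fun ω => (1 - A ω) * Y ω | MeasurableSpace.comap X inferInstance]
      =ᵐ[P] fun ω => μ₀ (X ω) * (1 - π₁ (X ω)))
    (σ₁sq σ₀sq : 𝒳 → ℝ) (hσ₁m : Measurable σ₁sq) (hσ₀m : Measurable σ₀sq)
    (hσ₁L1 : Integrable (fun ω => σ₁sq (X ω)) P)
    (hσ₀L1 : Integrable (fun ω => σ₀sq (X ω)) P)
    (hcondsq1 : P[fun ω => A ω * Y ω ^ 2 | MeasurableSpace.comap X inferInstance]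
      =ᵐ[P] fun ω => (μ₁ (X ω) ^ 2 + σ₁sq (X ω)) * π₁ (X ω))
    (hcondsq0 : P[fun ω => (1 - A ω) * Y ω ^ 2 | MeasurableSpace.comap X inferInstance]
      =ᵐ[P] fun ω => (μ₀ (X ω) ^ 2 + σ₀sq (X ω)) * (1 - π₁ (X ω)))
    (D : 𝒳 → ℝ) (hDm : Measurable D) (hDr : ∀ x, D x ∈ Set.Icc (0 : ℝ) 1) :
    MemLp (aipw X A Y D π₁ μ₁ μ₀) 2 P ∧
    (∫ ω, aipw X A Y D π₁ μ₁ μ₀ ω ∂P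
      = ∫ ω, (D (X ω) * μ₁ (X ω) + (1 - D (X ω)) * μ₀ (X ω)) ∂P) ∧
    variance (aipw X A Y D π₁ μ₁ μ₀) P
      = (∫ ω, (σ₁sq (X ω) * D (X ω) ^ 2 / π₁ (X ω)
          + σ₀sq (X ω) * (1 - D (X ω)) ^ 2 / (1 - π₁ (X ω))) ∂P)
        + variance (fun ω => D (X ω) * μ₁ (X ω) + (1 - D (X ω)) * μ₀ (X ω)) P := by
  obtain ⟨hc0, hc2⟩ := hc
  have hπc : ∀ x, c ≤ π₁ x := fun x => (hπ₁r x).1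
  have hπ1c : ∀ x, π₁ x ≤ 1 - c := fun x => (hπ₁r x).2
  have hπpos : ∀ x, 0 < π₁ x := fun x => lt_of_lt_of_le hc0 (hπc x)
  have h1πpos : ∀ x, 0 < 1 - π₁ x := fun x => by have := hπ1c x; linarith
  have h1πc : ∀ x, c ≤ 1 - π₁ x := fun x => by have := hπ1c x; linarith
  have hD0 : ∀ x, 0 ≤ D x := fun x => (hDr x).1
  have hD1 : ∀ x, D x ≤ 1 := fun x => (hDr x).2
  have hA01 : ∀ ω, 0 ≤ A ω ∧ A ω ≤ 1 := fun ω => by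
    rcases hAbin ω with h | h <;> rw [h] <;> norm_num
  have hAabs : ∀ ω, |A ω| ≤ 1 := fun ω => abs_le.2 ⟨by linarith [(hA01 ω).1], (hA01 ω).2⟩
  have h1Aabs : ∀ ω, |1 - A ω| ≤ 1 :=
    fun ω => abs_le.2 ⟨by linarith [(hA01 ω).2], by linarith [(hA01 ω).1]⟩
  set u : 𝒳 → ℝ := fun x => D x / π₁ x with hu_def
  set v : 𝒳 → ℝ := fun x => (1 - D x) / (1 - π₁ x) with hv_def
  set h : 𝒳 → ℝ := fun x => D x * μ₁ x + (1 - D x) * μ₀ x with hh_def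
  have hu_abs : ∀ x, |u x| ≤ 1 / c := fun x => by
    have h1 : |D x| ≤ 1 := abs_le.2 ⟨by linarith [hD0 x], hD1 x⟩
    have h2 : c ≤ |π₁ x| := by rw [abs_of_pos (hπpos x)]; exact hπc x
    simp only [hu_def]
    rw [abs_div]
    exact div_le_div₀ zero_le_one h1 hc0 h2
  have hv_abs : ∀ x, |v x| ≤ 1 / c := fun x => by
    have h1 : |1 - D x| ≤ 1 := abs_le.2 ⟨by linarith [hD1 x], by linarith [hD0 x]⟩
    have h2 : c ≤ |1 - π₁ x| := by rw [abs_of_pos (h1πpos x)]; exact h1πc x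
    simp only [hv_def]
    rw [abs_div]
    exact div_le_div₀ zero_le_one h1 hc0 h2
  have hπabs : ∀ x, |π₁ x| ≤ 1 := fun x => abs_le.2 ⟨by linarith [hπpos x], by linarith [h1πpos x]⟩
  have h1πabs : ∀ x, |1 - π₁ x| ≤ 1 :=
    fun x => abs_le.2 ⟨by linarith [h1πpos x], by linarith [hπpos x]⟩
  have humeas : Measurable u := by rw [hu_def]; exact hDm.div hπ₁m
  have hvmeas : Measurable v := by
    rw [hv_def]; exact (measurable_const.sub hDm).div (measurable_const.sub hπ₁m)
  have hhmeas : Measurable h := by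
    rw [hh_def]; exact (hDm.mul hμ₁m).add ((measurable_const.sub hDm).mul hμ₀m)
  have hDabs : ∀ x, |D x| ≤ 1 := fun x => abs_le.2 ⟨by linarith [hD0 x], hD1 x⟩
  have h1Dabs : ∀ x, |1 - D x| ≤ 1 := fun x => abs_le.2 ⟨by linarith [hD1 x], by linarith [hD0 x]⟩
  -- L² facts
  have hYm1 : MemLp (fun ω => Y ω - μ₁ (X ω)) 2 P := hYL2.sub hμ₁L2
  have hYm0 : MemLp (fun ω => Y ω - μ₀ (X ω)) 2 P := hYL2.sub hμ₀L2
  have hhL2 : MemLp (fun ω => h (X ω)) 2 P := by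
    simp only [hh_def]
    exact (bddmulL2 (hDm.comp hX).aestronglyMeasurable 1 (fun ω => hDabs (X ω)) hμ₁L2).add
      (bddmulL2 ((measurable_const.sub hDm).comp hX).aestronglyMeasurable 1
        (fun ω => h1Dabs (X ω)) hμ₀L2)
  -- integrable cores
  have hYint : Integrable Y P := hYL2.integrable one_le_two
  have hY2int : Integrable (fun ω => Y ω ^ 2) P := hYL2.integrable_sq
  have hμ₁int : Integrable (fun ω => μ₁ (X ω)) P := hμ₁L2.integrable one_le_two
  have hμ₀int : Integrable (fun ω => μ₀ (X ω)) P := hμ₀L2.integrable one_le_two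
  have hAY : Integrable (fun ω => A ω * Y ω) P := bddmul hA.aestronglyMeasurable 1 hAabs hYint
  have h1AY : Integrable (fun ω => (1 - A ω) * Y ω) P :=
    bddmul (measurable_const.sub hA).aestronglyMeasurable 1 h1Aabs hYint
  have hAY2 : Integrable (fun ω => A ω * Y ω ^ 2) P :=
    bddmul hA.aestronglyMeasurable 1 hAabs hY2int
  have h1AY2 : Integrable (fun ω => (1 - A ω) * Y ω ^ 2) P :=
    bddmul (measurable_const.sub hA).aestronglyMeasurable 1 h1Aabs hY2int
  have hAint : Integrable A P := by
    simpa using bddmul hA.aestronglyMeasurable 1 hAabs (integrable_const (1 : ℝ))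
  have h1Aint : Integrable (fun ω => 1 - A ω) P := (integrable_const 1).sub hAint
  have intcongr : ∀ {f g : Ω → ℝ}, Integrable f P → (∀ ω, f ω = g ω) → Integrable g P :=
    fun hf hfg => hf.congr (Eventually.of_forall hfg)
  have hm : MeasurableSpace.comap X inferInstance ≤ (inferInstance : MeasurableSpace Ω) :=
    hX.comap_le
  have hcond1mA : P[fun ω => (1 : ℝ) - A ω | MeasurableSpace.comap X inferInstance]
      =ᵐ[P] fun ω => 1 - π₁ (X ω) := by
    have h2 := condExp_sub (μ := P) (m := MeasurableSpace.comap X inferInstance)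
      (f := fun _ : Ω => (1 : ℝ)) (g := A) (integrable_const 1) hAint
    have h1 : P[fun _ : Ω => (1 : ℝ) | MeasurableSpace.comap X inferInstance] = fun _ => 1 :=
      condExp_const hm 1
    have h3 : (fun _ : Ω => (1 : ℝ)) - A = fun ω => 1 - A ω := rfl
    rw [h3] at h2
    filter_upwards [h2, hcondA] with ω e2 eA
    rw [e2, Pi.sub_apply, h1, eA]
  -- the two "zero" claims
  have Z1 : ∀ g : 𝒳 → ℝ, Measurable g →
      Integrable (fun ω => g (X ω) * Y ω) P →
      Integrable (fun ω => g (X ω) * μ₁ (X ω)) P →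
      ∫ ω, g (X ω) * (A ω * (Y ω - μ₁ (X ω))) ∂P = 0 := by
    intro g hg hgY hgμ
    have i1 : Integrable (fun ω => g (X ω) * (A ω * Y ω)) P :=
      intcongr (bddmul hA.aestronglyMeasurable 1 hAabs hgY) fun ω => by ring
    have i2 : Integrable (fun ω => g (X ω) * μ₁ (X ω) * A ω) P :=
      intcongr (bddmul hA.aestronglyMeasurable 1 hAabs hgμ) fun ω => by ring
    have e1 : ∫ ω, g (X ω) * (A ω * (Y ω - μ₁ (X ω))) ∂P
        = (∫ ω, g (X ω) * (A ω * Y ω) ∂P) - ∫ ω, g (X ω) * μ₁ (X ω) * A ω ∂P := by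
      rw [← integral_sub i1 i2]
      exact integral_congr_ae (Eventually.of_forall fun ω => by ring)
    have c1 : ∫ ω, g (X ω) * (A ω * Y ω) ∂P = ∫ ω, g (X ω) * (μ₁ (X ω) * π₁ (X ω)) ∂P :=
      ce_int (r := fun x => μ₁ x * π₁ x) hX hAY hg i1 hcond1
    have c2 : ∫ ω, g (X ω) * μ₁ (X ω) * A ω ∂P
        = ∫ ω, g (X ω) * μ₁ (X ω) * π₁ (X ω) ∂P :=
      ce_int (r := π₁) hX hAint (hg.mul hμ₁m) i2 hcondA
    rw [e1, c1, c2, sub_eq_zero]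
    exact integral_congr_ae (Eventually.of_forall fun ω => by ring)
  have Z0 : ∀ g : 𝒳 → ℝ, Measurable g →
      Integrable (fun ω => g (X ω) * Y ω) P →
      Integrable (fun ω => g (X ω) * μ₀ (X ω)) P →
      ∫ ω, g (X ω) * ((1 - A ω) * (Y ω - μ₀ (X ω))) ∂P = 0 := by
    intro g hg hgY hgμ
    have i1 : Integrable (fun ω => g (X ω) * ((1 - A ω) * Y ω)) P :=
      intcongr (bddmul (measurable_const.sub hA).aestronglyMeasurable 1 h1Aabs hgY)
        fun ω => by simp only [Pi.sub_apply]; ring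
    have i2 : Integrable (fun ω => g (X ω) * μ₀ (X ω) * (1 - A ω)) P :=
      intcongr (bddmul (measurable_const.sub hA).aestronglyMeasurable 1 h1Aabs hgμ)
        fun ω => by simp only [Pi.sub_apply]; ring
    have e1 : ∫ ω, g (X ω) * ((1 - A ω) * (Y ω - μ₀ (X ω))) ∂P
        = (∫ ω, g (X ω) * ((1 - A ω) * Y ω) ∂P) - ∫ ω, g (X ω) * μ₀ (X ω) * (1 - A ω) ∂P := by
      rw [← integral_sub i1 i2]
      exact integral_congr_ae (Eventually.of_forall fun ω => by ring)
    have c1 : ∫ ω, g (X ω) * ((1 - A ω) * Y ω) ∂P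
        = ∫ ω, g (X ω) * (μ₀ (X ω) * (1 - π₁ (X ω))) ∂P :=
      ce_int (r := fun x => μ₀ x * (1 - π₁ x)) hX h1AY hg i1 hcond0
    have c2 : ∫ ω, g (X ω) * μ₀ (X ω) * (1 - A ω) ∂P
        = ∫ ω, g (X ω) * μ₀ (X ω) * (1 - π₁ (X ω)) ∂P :=
      ce_int (r := fun x => 1 - π₁ x) hX h1Aint (hg.mul hμ₀m) i2 hcond1mA
    rw [e1, c1, c2, sub_eq_zero]
    exact integral_congr_ae (Eventually.of_forall fun ω => by ring)
  have W1 : ∀ g : 𝒳 → ℝ, Measurable g → ∀ C : ℝ, (∀ x, |g x| ≤ C) →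
      ∫ ω, g (X ω) * (A ω * (Y ω - μ₁ (X ω)) ^ 2) ∂P
        = ∫ ω, g (X ω) * (σ₁sq (X ω) * π₁ (X ω)) ∂P := by
    intro g hg C hC
    have hgXA : AEStronglyMeasurable (fun ω => g (X ω) * A ω) P :=
      ((hg.comp hX).mul hA).aestronglyMeasurable
    have hgXAabs : ∀ ω, |g (X ω) * A ω| ≤ C * 1 := fun ω => abs_mul_le' (hC (X ω)) (hAabs ω)
    have hgXA2 : AEStronglyMeasurable (fun ω => 2 * (g (X ω) * A ω)) P :=
      (measurable_const.mul ((hg.comp hX).mul hA)).aestronglyMeasurable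
    have hgXA2abs : ∀ ω, |2 * (g (X ω) * A ω)| ≤ 2 * (C * 1) := fun ω => by
      rw [abs_mul, abs_two]; exact mul_le_mul_of_nonneg_left (hgXAabs ω) (by norm_num)
    have hgXπ : AEStronglyMeasurable (fun ω => g (X ω) * π₁ (X ω)) P :=
      ((hg.comp hX).mul (hπ₁m.comp hX)).aestronglyMeasurable
    have hgXπabs : ∀ ω, |g (X ω) * π₁ (X ω)| ≤ C * 1 :=
      fun ω => abs_mul_le' (hC (X ω)) (hπabs (X ω))
    have hgXπ2 : AEStronglyMeasurable (fun ω => 2 * (g (X ω) * π₁ (X ω))) P :=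
      (measurable_const.mul ((hg.comp hX).mul (hπ₁m.comp hX))).aestronglyMeasurable
    have hgXπ2abs : ∀ ω, |2 * (g (X ω) * π₁ (X ω))| ≤ 2 * (C * 1) := fun ω => by
      rw [abs_mul, abs_two]; exact mul_le_mul_of_nonneg_left (hgXπabs ω) (by norm_num)
    have hμμ : Integrable (fun ω => μ₁ (X ω) * μ₁ (X ω)) P := l2mul hμ₁L2 hμ₁L2
    have i1 : Integrable (fun ω => g (X ω) * (A ω * Y ω ^ 2)) P :=
      intcongr (bddmul hgXA (C * 1) hgXAabs hY2int) fun ω => by ring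
    have i2 : Integrable (fun ω => 2 * (g (X ω) * μ₁ (X ω)) * (A ω * Y ω)) P := by
      have core : Integrable (fun ω => μ₁ (X ω) * Y ω) P := l2mul hμ₁L2 hYL2
      exact intcongr (bddmul hgXA2 (2 * (C * 1)) hgXA2abs core) fun ω => by ring
    have i3 : Integrable (fun ω => g (X ω) * μ₁ (X ω) ^ 2 * A ω) P :=
      intcongr (bddmul hgXA (C * 1) hgXAabs hμμ) fun ω => by ring
    have e1 := int_sub_add i1 i2 i3 (f := fun ω => g (X ω) * (A ω * (Y ω - μ₁ (X ω)) ^ 2))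
      (fun ω => by ring)
    have c1 : ∫ ω, g (X ω) * (A ω * Y ω ^ 2) ∂P
        = ∫ ω, g (X ω) * ((μ₁ (X ω) ^ 2 + σ₁sq (X ω)) * π₁ (X ω)) ∂P :=
      ce_int (r := fun x => (μ₁ x ^ 2 + σ₁sq x) * π₁ x) hX hAY2 hg i1 hcondsq1
    have c2 : ∫ ω, 2 * (g (X ω) * μ₁ (X ω)) * (A ω * Y ω) ∂P
        = ∫ ω, 2 * (g (X ω) * μ₁ (X ω)) * (μ₁ (X ω) * π₁ (X ω)) ∂P :=
      ce_int (r := fun x => μ₁ x * π₁ x) hX hAY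
        (measurable_const.mul (hg.mul hμ₁m)) i2 hcond1
    have c3 : ∫ ω, g (X ω) * μ₁ (X ω) ^ 2 * A ω ∂P
        = ∫ ω, g (X ω) * μ₁ (X ω) ^ 2 * π₁ (X ω) ∂P :=
      ce_int (r := π₁) hX hAint ((hg.mul (hμ₁m.pow_const 2))) i3 hcondA
    have j1 : Integrable (fun ω => g (X ω) * ((μ₁ (X ω) ^ 2 + σ₁sq (X ω)) * π₁ (X ω))) P :=
      intcongr (bddmul hgXπ (C * 1) hgXπabs (hμ₁L2.integrable_sq.add hσ₁L1)) fun ω => by simp only [Pi.add_apply]; ring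
    have j2 : Integrable (fun ω => 2 * (g (X ω) * μ₁ (X ω)) * (μ₁ (X ω) * π₁ (X ω))) P :=
      intcongr (bddmul hgXπ2 (2 * (C * 1)) hgXπ2abs hμμ) fun ω => by ring
    have j3 : Integrable (fun ω => g (X ω) * μ₁ (X ω) ^ 2 * π₁ (X ω)) P :=
      intcongr (bddmul hgXπ (C * 1) hgXπabs hμμ) fun ω => by ring
    rw [e1, c1, c2, c3]
    exact (int_sub_add j1 j2 j3 (f := fun ω => g (X ω) * (σ₁sq (X ω) * π₁ (X ω)))
      (fun ω => by ring)).symm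
  have W0 : ∀ g : 𝒳 → ℝ, Measurable g → ∀ C : ℝ, (∀ x, |g x| ≤ C) →
      ∫ ω, g (X ω) * ((1 - A ω) * (Y ω - μ₀ (X ω)) ^ 2) ∂P
        = ∫ ω, g (X ω) * (σ₀sq (X ω) * (1 - π₁ (X ω))) ∂P := by
    intro g hg C hC
    have hgXA : AEStronglyMeasurable (fun ω => g (X ω) * (1 - A ω)) P :=
      ((hg.comp hX).mul (measurable_const.sub hA)).aestronglyMeasurable
    have hgXAabs : ∀ ω, |g (X ω) * (1 - A ω)| ≤ C * 1 :=
      fun ω => abs_mul_le' (hC (X ω)) (h1Aabs ω)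
    have hgXA2 : AEStronglyMeasurable (fun ω => 2 * (g (X ω) * (1 - A ω))) P :=
      (measurable_const.mul ((hg.comp hX).mul (measurable_const.sub hA))).aestronglyMeasurable
    have hgXA2abs : ∀ ω, |2 * (g (X ω) * (1 - A ω))| ≤ 2 * (C * 1) := fun ω => by
      rw [abs_mul, abs_two]; exact mul_le_mul_of_nonneg_left (hgXAabs ω) (by norm_num)
    have hgXπ : AEStronglyMeasurable (fun ω => g (X ω) * (1 - π₁ (X ω))) P :=
      ((hg.comp hX).mul (measurable_const.sub (hπ₁m.comp hX))).aestronglyMeasurable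
    have hgXπabs : ∀ ω, |g (X ω) * (1 - π₁ (X ω))| ≤ C * 1 :=
      fun ω => abs_mul_le' (hC (X ω)) (h1πabs (X ω))
    have hgXπ2 : AEStronglyMeasurable (fun ω => 2 * (g (X ω) * (1 - π₁ (X ω)))) P :=
      (measurable_const.mul
        ((hg.comp hX).mul (measurable_const.sub (hπ₁m.comp hX)))).aestronglyMeasurable
    have hgXπ2abs : ∀ ω, |2 * (g (X ω) * (1 - π₁ (X ω)))| ≤ 2 * (C * 1) := fun ω => by
      rw [abs_mul, abs_two]; exact mul_le_mul_of_nonneg_left (hgXπabs ω) (by norm_num)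
    have hμμ : Integrable (fun ω => μ₀ (X ω) * μ₀ (X ω)) P := l2mul hμ₀L2 hμ₀L2
    have i1 : Integrable (fun ω => g (X ω) * ((1 - A ω) * Y ω ^ 2)) P :=
      intcongr (bddmul hgXA (C * 1) hgXAabs hY2int) fun ω => by ring
    have i2 : Integrable (fun ω => 2 * (g (X ω) * μ₀ (X ω)) * ((1 - A ω) * Y ω)) P := by
      have core : Integrable (fun ω => μ₀ (X ω) * Y ω) P := l2mul hμ₀L2 hYL2
      exact intcongr (bddmul hgXA2 (2 * (C * 1)) hgXA2abs core) fun ω => by ring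
    have i3 : Integrable (fun ω => g (X ω) * μ₀ (X ω) ^ 2 * (1 - A ω)) P :=
      intcongr (bddmul hgXA (C * 1) hgXAabs hμμ) fun ω => by ring
    have e1 := int_sub_add i1 i2 i3
      (f := fun ω => g (X ω) * ((1 - A ω) * (Y ω - μ₀ (X ω)) ^ 2)) (fun ω => by ring)
    have c1 : ∫ ω, g (X ω) * ((1 - A ω) * Y ω ^ 2) ∂P
        = ∫ ω, g (X ω) * ((μ₀ (X ω) ^ 2 + σ₀sq (X ω)) * (1 - π₁ (X ω))) ∂P :=
      ce_int (r := fun x => (μ₀ x ^ 2 + σ₀sq x) * (1 - π₁ x)) hX h1AY2 hg i1 hcondsq0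
    have c2 : ∫ ω, 2 * (g (X ω) * μ₀ (X ω)) * ((1 - A ω) * Y ω) ∂P
        = ∫ ω, 2 * (g (X ω) * μ₀ (X ω)) * (μ₀ (X ω) * (1 - π₁ (X ω))) ∂P :=
      ce_int (r := fun x => μ₀ x * (1 - π₁ x)) hX h1AY
        (measurable_const.mul (hg.mul hμ₀m)) i2 hcond0
    have c3 : ∫ ω, g (X ω) * μ₀ (X ω) ^ 2 * (1 - A ω) ∂P
        = ∫ ω, g (X ω) * μ₀ (X ω) ^ 2 * (1 - π₁ (X ω)) ∂P :=
      ce_int (r := fun x => 1 - π₁ x) hX h1Aint ((hg.mul (hμ₀m.pow_const 2))) i3 hcond1mA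
    have j1 : Integrable (fun ω => g (X ω) * ((μ₀ (X ω) ^ 2 + σ₀sq (X ω)) * (1 - π₁ (X ω)))) P :=
      intcongr (bddmul hgXπ (C * 1) hgXπabs (hμ₀L2.integrable_sq.add hσ₀L1)) fun ω => by simp only [Pi.add_apply]; ring
    have j2 : Integrable (fun ω => 2 * (g (X ω) * μ₀ (X ω)) * (μ₀ (X ω) * (1 - π₁ (X ω)))) P :=
      intcongr (bddmul hgXπ2 (2 * (C * 1)) hgXπ2abs hμμ) fun ω => by ring
    have j3 : Integrable (fun ω => g (X ω) * μ₀ (X ω) ^ 2 * (1 - π₁ (X ω))) P :=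
      intcongr (bddmul hgXπ (C * 1) hgXπabs hμμ) fun ω => by ring
    rw [e1, c1, c2, c3]
    exact (int_sub_add j1 j2 j3 (f := fun ω => g (X ω) * (σ₀sq (X ω) * (1 - π₁ (X ω))))
      (fun ω => by ring)).symm
  -- pointwise decomposition
  have hpt : ∀ ω, aipw X A Y D π₁ μ₁ μ₀ ω
      = u (X ω) * (A ω * (Y ω - μ₁ (X ω)))
        + v (X ω) * ((1 - A ω) * (Y ω - μ₀ (X ω))) + h (X ω) := by
    intro ω
    have h1 := (hπpos (X ω)).ne'
    have h2 := (h1πpos (X ω)).ne'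
    simp only [aipw, hu_def, hv_def, hh_def]
    rcases hAbin ω with hA' | hA' <;> rw [hA'] <;>
      first
        | ring
        | (field_simp; ring)
  have huXA : AEStronglyMeasurable (fun ω => u (X ω) * A ω) P :=
    ((humeas.comp hX).mul hA).aestronglyMeasurable
  have huXAabs : ∀ ω, |u (X ω) * A ω| ≤ 1 / c * 1 :=
    fun ω => abs_mul_le' (hu_abs (X ω)) (hAabs ω)
  have hvXA : AEStronglyMeasurable (fun ω => v (X ω) * (1 - A ω)) P :=
    ((hvmeas.comp hX).mul (measurable_const.sub hA)).aestronglyMeasurable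
  have hvXAabs : ∀ ω, |v (X ω) * (1 - A ω)| ≤ 1 / c * 1 :=
    fun ω => abs_mul_le' (hv_abs (X ω)) (h1Aabs ω)
  have if1 : Integrable (fun ω => u (X ω) * (A ω * (Y ω - μ₁ (X ω)))) P :=
    intcongr (bddmul huXA (1 / c * 1) huXAabs (hYm1.integrable one_le_two)) fun ω => by ring
  have if2 : Integrable (fun ω => v (X ω) * ((1 - A ω) * (Y ω - μ₀ (X ω)))) P :=
    intcongr (bddmul hvXA (1 / c * 1) hvXAabs (hYm0.integrable one_le_two)) fun ω => by ring
  have if3 : Integrable (fun ω => h (X ω)) P := hhL2.integrable one_le_two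
  have huXasm : AEStronglyMeasurable (fun ω => u (X ω)) P :=
    (humeas.comp hX).aestronglyMeasurable
  have hvXasm : AEStronglyMeasurable (fun ω => v (X ω)) P :=
    (hvmeas.comp hX).aestronglyMeasurable
  have z1 : ∫ ω, u (X ω) * (A ω * (Y ω - μ₁ (X ω))) ∂P = 0 :=
    Z1 u humeas (bddmul huXasm (1 / c) (fun ω => hu_abs (X ω)) hYint)
      (bddmul huXasm (1 / c) (fun ω => hu_abs (X ω)) hμ₁int)
  have z0 : ∫ ω, v (X ω) * ((1 - A ω) * (Y ω - μ₀ (X ω))) ∂P = 0 :=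
    Z0 v hvmeas (bddmul hvXasm (1 / c) (fun ω => hv_abs (X ω)) hYint)
      (bddmul hvXasm (1 / c) (fun ω => hv_abs (X ω)) hμ₀int)
  have hmean : ∫ ω, aipw X A Y D π₁ μ₁ μ₀ ω ∂P = ∫ ω, h (X ω) ∂P := by
    rw [int_add3 if1 if2 if3 hpt, z1, z0]; ring
  -- second moment pointwise identity
  have hpt2 : ∀ ω, (aipw X A Y D π₁ μ₁ μ₀ ω) ^ 2
      = u (X ω) ^ 2 * (A ω * (Y ω - μ₁ (X ω)) ^ 2)
        + v (X ω) ^ 2 * ((1 - A ω) * (Y ω - μ₀ (X ω)) ^ 2)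
        + 2 * (h (X ω) * u (X ω)) * (A ω * (Y ω - μ₁ (X ω)))
        + 2 * (h (X ω) * v (X ω)) * ((1 - A ω) * (Y ω - μ₀ (X ω)))
        + h (X ω) ^ 2 := by
    intro ω
    have h1 := (hπpos (X ω)).ne'
    have h2 := (h1πpos (X ω)).ne'
    simp only [aipw, hu_def, hv_def, hh_def]
    rcases hAbin ω with hA' | hA' <;> rw [hA'] <;>
      first
        | ring
        | (field_simp; ring)
  have hu2abs : ∀ x, |u x ^ 2| ≤ (1 / c) ^ 2 := fun x => by
    rw [abs_pow]; exact pow_le_pow_left₀ (abs_nonneg _) (hu_abs x) 2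
  have hv2abs : ∀ x, |v x ^ 2| ≤ (1 / c) ^ 2 := fun x => by
    rw [abs_pow]; exact pow_le_pow_left₀ (abs_nonneg _) (hv_abs x) 2
  have hu2XA : AEStronglyMeasurable (fun ω => u (X ω) ^ 2 * A ω) P :=
    (((humeas.comp hX).pow_const 2).mul hA).aestronglyMeasurable
  have hv2XA : AEStronglyMeasurable (fun ω => v (X ω) ^ 2 * (1 - A ω)) P :=
    (((hvmeas.comp hX).pow_const 2).mul (measurable_const.sub hA)).aestronglyMeasurable
  have iq1 : Integrable (fun ω => u (X ω) ^ 2 * (A ω * (Y ω - μ₁ (X ω)) ^ 2)) P :=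
    intcongr (bddmul hu2XA ((1 / c) ^ 2 * 1)
      (fun ω => abs_mul_le' (hu2abs (X ω)) (hAabs ω)) hYm1.integrable_sq) fun ω => by ring
  have iq2 : Integrable (fun ω => v (X ω) ^ 2 * ((1 - A ω) * (Y ω - μ₀ (X ω)) ^ 2)) P :=
    intcongr (bddmul hv2XA ((1 / c) ^ 2 * 1)
      (fun ω => abs_mul_le' (hv2abs (X ω)) (h1Aabs ω)) hYm0.integrable_sq) fun ω => by ring
  have h2uXA : AEStronglyMeasurable (fun ω => 2 * (u (X ω) * A ω)) P :=
    (measurable_const.mul ((humeas.comp hX).mul hA)).aestronglyMeasurable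
  have h2uXAabs : ∀ ω, |2 * (u (X ω) * A ω)| ≤ 2 * (1 / c * 1) := fun ω => by
    rw [abs_mul, abs_two]; exact mul_le_mul_of_nonneg_left (huXAabs ω) (by norm_num)
  have h2vXA : AEStronglyMeasurable (fun ω => 2 * (v (X ω) * (1 - A ω))) P :=
    (measurable_const.mul ((hvmeas.comp hX).mul (measurable_const.sub hA))).aestronglyMeasurable
  have h2vXAabs : ∀ ω, |2 * (v (X ω) * (1 - A ω))| ≤ 2 * (1 / c * 1) := fun ω => by
    rw [abs_mul, abs_two]; exact mul_le_mul_of_nonneg_left (hvXAabs ω) (by norm_num)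
  have iq3 : Integrable (fun ω => 2 * (h (X ω) * u (X ω)) * (A ω * (Y ω - μ₁ (X ω)))) P :=
    intcongr (bddmul h2uXA (2 * (1 / c * 1)) h2uXAabs (l2mul hhL2 hYm1)) fun ω => by ring
  have iq4 : Integrable
      (fun ω => 2 * (h (X ω) * v (X ω)) * ((1 - A ω) * (Y ω - μ₀ (X ω)))) P :=
    intcongr (bddmul h2vXA (2 * (1 / c * 1)) h2vXAabs (l2mul hhL2 hYm0)) fun ω => by ring
  have iq5 : Integrable (fun ω => h (X ω) ^ 2) P := hhL2.integrable_sq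
  have w1 : ∫ ω, u (X ω) ^ 2 * (A ω * (Y ω - μ₁ (X ω)) ^ 2) ∂P
      = ∫ ω, u (X ω) ^ 2 * (σ₁sq (X ω) * π₁ (X ω)) ∂P :=
    W1 (fun x => u x ^ 2) (humeas.pow_const 2) ((1 / c) ^ 2) hu2abs
  have w0 : ∫ ω, v (X ω) ^ 2 * ((1 - A ω) * (Y ω - μ₀ (X ω)) ^ 2) ∂P
      = ∫ ω, v (X ω) ^ 2 * (σ₀sq (X ω) * (1 - π₁ (X ω))) ∂P :=
    W0 (fun x => v x ^ 2) (hvmeas.pow_const 2) ((1 / c) ^ 2) hv2abs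
  have huX2 : AEStronglyMeasurable (fun ω => 2 * u (X ω)) P :=
    (measurable_const.mul (humeas.comp hX)).aestronglyMeasurable
  have huX2abs : ∀ ω, |2 * u (X ω)| ≤ 2 * (1 / c) := fun ω => by
    rw [abs_mul, abs_two]; exact mul_le_mul_of_nonneg_left (hu_abs (X ω)) (by norm_num)
  have hvX2 : AEStronglyMeasurable (fun ω => 2 * v (X ω)) P :=
    (measurable_const.mul (hvmeas.comp hX)).aestronglyMeasurable
  have hvX2abs : ∀ ω, |2 * v (X ω)| ≤ 2 * (1 / c) := fun ω => by
    rw [abs_mul, abs_two]; exact mul_le_mul_of_nonneg_left (hv_abs (X ω)) (by norm_num)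
  have z1' : ∫ ω, 2 * (h (X ω) * u (X ω)) * (A ω * (Y ω - μ₁ (X ω))) ∂P = 0 := by
    have k1 : Integrable (fun ω => 2 * (h (X ω) * u (X ω)) * Y ω) P :=
      intcongr (bddmul huX2 (2 * (1 / c)) huX2abs (l2mul hhL2 hYL2)) fun ω => by ring
    have k2 : Integrable (fun ω => 2 * (h (X ω) * u (X ω)) * μ₁ (X ω)) P :=
      intcongr (bddmul huX2 (2 * (1 / c)) huX2abs (l2mul hhL2 hμ₁L2)) fun ω => by ring
    exact Z1 (fun x => 2 * (h x * u x)) (measurable_const.mul (hhmeas.mul humeas)) k1 k2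
  have z0' : ∫ ω, 2 * (h (X ω) * v (X ω)) * ((1 - A ω) * (Y ω - μ₀ (X ω))) ∂P = 0 := by
    have k1 : Integrable (fun ω => 2 * (h (X ω) * v (X ω)) * Y ω) P :=
      intcongr (bddmul hvX2 (2 * (1 / c)) hvX2abs (l2mul hhL2 hYL2)) fun ω => by ring
    have k2 : Integrable (fun ω => 2 * (h (X ω) * v (X ω)) * μ₀ (X ω)) P :=
      intcongr (bddmul hvX2 (2 * (1 / c)) hvX2abs (l2mul hhL2 hμ₀L2)) fun ω => by ring
    exact Z0 (fun x => 2 * (h x * v x)) (measurable_const.mul (hhmeas.mul hvmeas)) k1 k2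
  have hsq : ∫ ω, (aipw X A Y D π₁ μ₁ μ₀ ω) ^ 2 ∂P
      = (∫ ω, u (X ω) ^ 2 * (σ₁sq (X ω) * π₁ (X ω)) ∂P)
        + (∫ ω, v (X ω) ^ 2 * (σ₀sq (X ω) * (1 - π₁ (X ω))) ∂P)
        + ∫ ω, h (X ω) ^ 2 ∂P := by
    rw [int_add5 iq1 iq2 iq3 iq4 iq5 hpt2, w1, w0, z1', z0']; ring
  have hu2Xπ : AEStronglyMeasurable (fun ω => u (X ω) ^ 2 * π₁ (X ω)) P :=
    (((humeas.comp hX).pow_const 2).mul (hπ₁m.comp hX)).aestronglyMeasurable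
  have hv2Xπ : AEStronglyMeasurable (fun ω => v (X ω) ^ 2 * (1 - π₁ (X ω))) P :=
    (((hvmeas.comp hX).pow_const 2).mul
      (measurable_const.sub (hπ₁m.comp hX))).aestronglyMeasurable
  have ja : Integrable (fun ω => u (X ω) ^ 2 * (σ₁sq (X ω) * π₁ (X ω))) P :=
    intcongr (bddmul hu2Xπ ((1 / c) ^ 2 * 1)
      (fun ω => abs_mul_le' (hu2abs (X ω)) (hπabs (X ω))) hσ₁L1) fun ω => by ring
  have jb : Integrable (fun ω => v (X ω) ^ 2 * (σ₀sq (X ω) * (1 - π₁ (X ω)))) P :=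
    intcongr (bddmul hv2Xπ ((1 / c) ^ 2 * 1)
      (fun ω => abs_mul_le' (hv2abs (X ω)) (h1πabs (X ω))) hσ₀L1) fun ω => by ring
  have hconv : (∫ ω, u (X ω) ^ 2 * (σ₁sq (X ω) * π₁ (X ω)) ∂P)
      + (∫ ω, v (X ω) ^ 2 * (σ₀sq (X ω) * (1 - π₁ (X ω))) ∂P)
      = ∫ ω, (σ₁sq (X ω) * D (X ω) ^ 2 / π₁ (X ω)
          + σ₀sq (X ω) * (1 - D (X ω)) ^ 2 / (1 - π₁ (X ω))) ∂P := by
    rw [← integral_add ja jb]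
    refine integral_congr_ae (Eventually.of_forall fun ω => ?_)
    simp only [hu_def, hv_def]
    have h1 := (hπpos (X ω)).ne'
    have h2 := (h1πpos (X ω)).ne'
    field_simp
  -- MemLp of aipw
  have hψ1 : MemLp (fun ω => u (X ω) * (A ω * (Y ω - μ₁ (X ω)))) 2 P :=
    MemLp.ae_eq (Eventually.of_forall fun ω => by ring)
      (bddmulL2 huXA (1 / c * 1) huXAabs hYm1)
  have hψ2 : MemLp (fun ω => v (X ω) * ((1 - A ω) * (Y ω - μ₀ (X ω)))) 2 P :=
    MemLp.ae_eq (Eventually.of_forall fun ω => by ring)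
      (bddmulL2 hvXA (1 / c * 1) hvXAabs hYm0)
  have hψL2 : MemLp (aipw X A Y D π₁ μ₁ μ₀) 2 P := by
    have hsum := (hψ1.add hψ2).add hhL2
    refine MemLp.ae_eq (Eventually.of_forall fun ω => ?_) hsum
    simp only [Pi.add_apply]
    exact (hpt ω).symm
  have hvar : variance (aipw X A Y D π₁ μ₁ μ₀) P
      = (∫ ω, (aipw X A Y D π₁ μ₁ μ₀ ω) ^ 2 ∂P)
        - (∫ ω, aipw X A Y D π₁ μ₁ μ₀ ω ∂P) ^ 2 := by
    have := variance_eq_sub hψL2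
    simpa [Pi.pow_apply] using this
  have hhL2' : MemLp (fun ω => D (X ω) * μ₁ (X ω) + (1 - D (X ω)) * μ₀ (X ω)) 2 P := hhL2
  have hvarh : variance (fun ω => D (X ω) * μ₁ (X ω) + (1 - D (X ω)) * μ₀ (X ω)) P
      = (∫ ω, h (X ω) ^ 2 ∂P) - (∫ ω, h (X ω) ∂P) ^ 2 := by
    have := variance_eq_sub hhL2'
    simpa [Pi.pow_apply] using this
  refine ⟨hψL2, ?_, ?_⟩
  · rw [hmean]
  · rw [hvar, hsq, hmean, hvarh, ← hconv]
    ring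

private lemma quad_min {s p d : ℝ} (hs : 0 ≤ s) (hp : 0 < p) (hp1 : p < 1) :
    s * p ^ 2 / p + s * (1 - p) ^ 2 / (1 - p) ≤ s * d ^ 2 / p + s * (1 - d) ^ 2 / (1 - p) := by
  have h1 : 0 < 1 - p := by linarith
  rw [div_add_div _ _ hp.ne' h1.ne', div_add_div _ _ hp.ne' h1.ne',
    div_le_div_iff₀ (by positivity) (by positivity)]
  nlinarith [mul_nonneg (mul_nonneg (mul_nonneg hs hp.le) h1.le) (sq_nonneg (d - p)),
    sq_nonneg (d - p), mul_pos hp h1]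

/-- Efficiency optimality of the adaptive-smoothing influence function
among unbiased AIPW scores: under homoscedasticity, for every measurable
`D : 𝒳 → [0,1]` with `V(D) = V₀`, `Var(ψ(D,π₁,(μ₁,μ₀))) ≥ Var(ψ(D_ad,π₁,(μ₁,μ₀)))`,
where `D_ad = 1{τ>0} + π₁·1{τ=0}` (`τ = μ₁ − μ₀`). Hence the infimum of the variance
over all such `D` equals
`Var(d₀(X)μ₁(X)+(1−d₀(X))μ₀(X)) + E[σ²(X)(1{τ(X)>0}/π₁(X) + 1{τ(X)<0}/(1−π₁(X)))]
 + E[σ²(X)·1{τ(X)=0}]` and is attained at `D = D_ad` (which satisfies `V(D_ad) = V₀`). -/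
theorem stmt_16 {Ω 𝒳 : Type*} [MeasurableSpace Ω] [MeasurableSpace 𝒳]
    (P : Measure Ω) [IsProbabilityMeasure P]
    (X : Ω → 𝒳) (A Y : Ω → ℝ)
    (hX : Measurable X) (hA : Measurable A) (hY : Measurable Y)
    (hAbin : ∀ ω, A ω = 0 ∨ A ω = 1) (hYL2 : MemLp Y 2 P)
    (c : ℝ) (hc : c ∈ Set.Ioo (0 : ℝ) (1 / 2))
    (π₁ : 𝒳 → ℝ) (hπ₁m : Measurable π₁) (hπ₁r : ∀ x, π₁ x ∈ Set.Icc c (1 - c))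
    (hcondA : P[A | MeasurableSpace.comap X inferInstance]
      =ᵐ[P] fun ω => π₁ (X ω))
    (μ₁ μ₀ : 𝒳 → ℝ) (hμ₁m : Measurable μ₁) (hμ₀m : Measurable μ₀)
    (hμ₁L2 : MemLp (fun ω => μ₁ (X ω)) 2 P) (hμ₀L2 : MemLp (fun ω => μ₀ (X ω)) 2 P)
    (hcond1 : P[fun ω => A ω * Y ω | MeasurableSpace.comap X inferInstance]
      =ᵐ[P] fun ω => μ₁ (X ω) * π₁ (X ω))
    (hcond0 : P[fun ω => (1 - A ω) * Y ω | MeasurableSpace.comap X inferInstance]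
      =ᵐ[P] fun ω => μ₀ (X ω) * (1 - π₁ (X ω)))
    (σ₁sq σ₀sq : 𝒳 → ℝ) (hσ₁m : Measurable σ₁sq) (hσ₀m : Measurable σ₀sq)
    (hσ₁nn : ∀ x, 0 ≤ σ₁sq x) (hσ₀nn : ∀ x, 0 ≤ σ₀sq x)
    (hσ₁L1 : Integrable (fun ω => σ₁sq (X ω)) P)
    (hσ₀L1 : Integrable (fun ω => σ₀sq (X ω)) P)
    (hcondsq1 : P[fun ω => A ω * Y ω ^ 2 | MeasurableSpace.comap X inferInstance]
      =ᵐ[P] fun ω => (μ₁ (X ω) ^ 2 + σ₁sq (X ω)) * π₁ (X ω))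
    (hcondsq0 : P[fun ω => (1 - A ω) * Y ω ^ 2 | MeasurableSpace.comap X inferInstance]
      =ᵐ[P] fun ω => (μ₀ (X ω) ^ 2 + σ₀sq (X ω)) * (1 - π₁ (X ω)))
    (σsq : 𝒳 → ℝ) (hσm : Measurable σsq)
    (hhomo1 : (fun x => σ₁sq x) =ᵐ[Measure.map X P] σsq)
    (hhomo0 : (fun x => σ₀sq x) =ᵐ[Measure.map X P] σsq)
    (Dad : 𝒳 → ℝ)
    (hDad : ∀ x, Dad x = (if 0 < μ₁ x - μ₀ x then (1 : ℝ) else 0)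
      + π₁ x * (if μ₁ x - μ₀ x = 0 then (1 : ℝ) else 0))
    (d₀ : 𝒳 → ℝ) (hd₀ : ∀ x, d₀ x = if 0 < μ₁ x - μ₀ x then (1 : ℝ) else 0)
    (V₀ : ℝ) (hV₀ : V₀ = ∫ ω, max (μ₁ (X ω)) (μ₀ (X ω)) ∂P) :
    (∀ D : 𝒳 → ℝ, Measurable D → (∀ x, D x ∈ Set.Icc (0 : ℝ) 1) →
      (∫ ω, (D (X ω) * μ₁ (X ω) + (1 - D (X ω)) * μ₀ (X ω)) ∂P) = V₀ →
      variance (aipw X A Y Dad π₁ μ₁ μ₀) P ≤ variance (aipw X A Y D π₁ μ₁ μ₀) P) ∧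
    (∫ ω, (Dad (X ω) * μ₁ (X ω) + (1 - Dad (X ω)) * μ₀ (X ω)) ∂P) = V₀ ∧
    variance (aipw X A Y Dad π₁ μ₁ μ₀) P
      = variance (fun ω => d₀ (X ω) * μ₁ (X ω) + (1 - d₀ (X ω)) * μ₀ (X ω)) P
        + ∫ ω, σsq (X ω) * ((if 0 < μ₁ (X ω) - μ₀ (X ω) then (1 : ℝ) else 0) / π₁ (X ω)
            + (if μ₁ (X ω) - μ₀ (X ω) < 0 then (1 : ℝ) else 0) / (1 - π₁ (X ω))) ∂P
        + ∫ ω, σsq (X ω) * (if μ₁ (X ω) - μ₀ (X ω) = 0 then (1 : ℝ) else 0) ∂P := by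
  classical
  obtain ⟨hc0, hc2⟩ := hc
  have hπc : ∀ x, c ≤ π₁ x := fun x => (hπ₁r x).1
  have hπ1c : ∀ x, π₁ x ≤ 1 - c := fun x => (hπ₁r x).2
  have hπpos : ∀ x, 0 < π₁ x := fun x => lt_of_lt_of_le hc0 (hπc x)
  have h1πpos : ∀ x, 0 < 1 - π₁ x := fun x => by have := hπ1c x; linarith
  have h1πc : ∀ x, c ≤ 1 - π₁ x := fun x => by have := hπ1c x; linarith
  -- Dad is measurable and [0,1]-valued
  have hτm : Measurable fun x => μ₁ x - μ₀ x := hμ₁m.sub hμ₀m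
  have hDadm : Measurable Dad := by
    have : Dad = fun x => (if 0 < μ₁ x - μ₀ x then (1 : ℝ) else 0)
        + π₁ x * (if μ₁ x - μ₀ x = 0 then (1 : ℝ) else 0) := funext hDad
    rw [this]
    exact (Measurable.ite (measurableSet_lt measurable_const hτm) measurable_const
        measurable_const).add
      (hπ₁m.mul (Measurable.ite (measurableSet_eq_fun hτm measurable_const) measurable_const
        measurable_const))
  have hDadr : ∀ x, Dad x ∈ Set.Icc (0 : ℝ) 1 := by
    intro x
    rw [hDad x]
    rcases lt_trichotomy (μ₁ x - μ₀ x) 0 with h' | h' | h'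
    · rw [if_neg (by linarith), if_neg (by linarith)]
      constructor <;> norm_num
    · rw [if_neg (by rw [h']; exact lt_irrefl 0), if_pos h']
      have := hπpos x; have := h1πpos x
      constructor <;> [linarith; linarith]
    · rw [if_pos h', if_neg (by linarith)]
      constructor <;> norm_num
  -- h-values of Dad and d₀ equal the max
  have hDad_h : ∀ x, Dad x * μ₁ x + (1 - Dad x) * μ₀ x = max (μ₁ x) (μ₀ x) := by
    intro x
    rcases lt_trichotomy (μ₁ x - μ₀ x) 0 with h' | h' | h'
    · rw [hDad x, if_neg (by linarith), if_neg (by linarith), max_eq_right (by linarith)]; ring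
    · have hμeq : μ₁ x = μ₀ x := by linarith
      rw [hDad x, if_neg (by rw [h']; exact lt_irrefl 0), if_pos h',
        max_eq_right (by linarith), hμeq]
      ring
    · rw [hDad x, if_pos h', if_neg (by linarith), max_eq_left (by linarith)]; ring
  have hd₀_h : ∀ x, d₀ x * μ₁ x + (1 - d₀ x) * μ₀ x = max (μ₁ x) (μ₀ x) := by
    intro x
    rcases lt_trichotomy (μ₁ x - μ₀ x) 0 with h' | h' | h'
    · rw [hd₀ x, if_neg (by linarith), max_eq_right (by linarith)]; ring
    · have hμeq : μ₁ x = μ₀ x := by linarith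
      rw [hd₀ x, if_neg (by rw [h']; exact lt_irrefl 0), max_eq_right (by linarith), hμeq]; ring
    · rw [hd₀ x, if_pos h', max_eq_left (by linarith)]; ring
  -- homoscedasticity transferred to Ω
  have hs1 : (fun ω => σ₁sq (X ω)) =ᵐ[P] fun ω => σsq (X ω) :=
    (MeasureTheory.ae_map_iff hX.aemeasurable (measurableSet_eq_fun hσ₁m hσm)).mp hhomo1
  have hs0 : (fun ω => σ₀sq (X ω)) =ᵐ[P] fun ω => σsq (X ω) :=
    (MeasureTheory.ae_map_iff hX.aemeasurable (measurableSet_eq_fun hσ₀m hσm)).mp hhomo0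
  have hσnn : ∀ᵐ ω ∂P, 0 ≤ σsq (X ω) := by
    filter_upwards [hs1] with ω e
    rw [← e]; exact hσ₁nn (X ω)
  have hσXint : Integrable (fun ω => σsq (X ω)) P := hσ₁L1.congr hs1
  -- moments of the adaptive rule
  obtain ⟨hψadL2, hmeanad, hvarad⟩ := aipw_moments P X A Y hX hA hY hAbin hYL2 c ⟨hc0, hc2⟩
    π₁ hπ₁m hπ₁r hcondA μ₁ μ₀ hμ₁m hμ₀m hμ₁L2 hμ₀L2 hcond1 hcond0 σ₁sq σ₀sq hσ₁m hσ₀m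
    hσ₁L1 hσ₀L1 hcondsq1 hcondsq0 Dad hDadm hDadr
  -- integrability helpers
  have hμ₁int : Integrable (fun ω => μ₁ (X ω)) P := hμ₁L2.integrable one_le_two
  have hμ₀int : Integrable (fun ω => μ₀ (X ω)) P := hμ₀L2.integrable one_le_two
  have hmaxint : Integrable (fun ω => max (μ₁ (X ω)) (μ₀ (X ω))) P := by
    refine (hμ₁int.sup hμ₀int).congr (Eventually.of_forall fun ω => ?_)
    simp [Pi.sup_apply]
  have hL2form : ∀ D : 𝒳 → ℝ, Measurable D → (∀ x, D x ∈ Set.Icc (0 : ℝ) 1) →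
      MemLp (fun ω => D (X ω) * μ₁ (X ω) + (1 - D (X ω)) * μ₀ (X ω)) 2 P := by
    intro D hDm hDr
    have a1 : AEStronglyMeasurable (fun ω => D (X ω)) P := (hDm.comp hX).aestronglyMeasurable
    have a0 : AEStronglyMeasurable (fun ω => 1 - D (X ω)) P :=
      ((measurable_const.sub hDm).comp hX).aestronglyMeasurable
    exact (bddmulL2 a1 1
        (fun ω => abs_le.2 ⟨by linarith [(hDr (X ω)).1], (hDr (X ω)).2⟩) hμ₁L2).add
      (bddmulL2 a0 1
        (fun ω => abs_le.2 ⟨by linarith [(hDr (X ω)).2], by linarith [(hDr (X ω)).1]⟩) hμ₀L2)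
  -- integrability of the sigma-part integrand, for any [0,1]-valued D
  have sint : ∀ D : 𝒳 → ℝ, Measurable D → (∀ x, D x ∈ Set.Icc (0 : ℝ) 1) →
      Integrable (fun ω => σ₁sq (X ω) * D (X ω) ^ 2 / π₁ (X ω)
        + σ₀sq (X ω) * (1 - D (X ω)) ^ 2 / (1 - π₁ (X ω))) P := by
    intro D hDm hDr
    have b1 : AEStronglyMeasurable (fun ω => D (X ω) ^ 2 / π₁ (X ω)) P :=
      (((hDm.comp hX).pow_const 2).div (hπ₁m.comp hX)).aestronglyMeasurable
    have b1abs : ∀ ω, |D (X ω) ^ 2 / π₁ (X ω)| ≤ 1 / c := fun ω => by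
      rw [abs_div]
      refine div_le_div₀ zero_le_one ?_ hc0 ?_
      · rw [abs_pow]
        exact pow_le_one₀ (abs_nonneg _)
          (abs_le.2 ⟨by linarith [(hDr (X ω)).1], (hDr (X ω)).2⟩)
      · rw [abs_of_pos (hπpos (X ω))]; exact hπc (X ω)
    have b0 : AEStronglyMeasurable (fun ω => (1 - D (X ω)) ^ 2 / (1 - π₁ (X ω))) P :=
      (((measurable_const.sub (hDm.comp hX)).pow_const 2).div
        (measurable_const.sub (hπ₁m.comp hX))).aestronglyMeasurable
    have b0abs : ∀ ω, |(1 - D (X ω)) ^ 2 / (1 - π₁ (X ω))| ≤ 1 / c := fun ω => by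
      rw [abs_div]
      refine div_le_div₀ zero_le_one ?_ hc0 ?_
      · rw [abs_pow]
        exact pow_le_one₀ (abs_nonneg _)
          (abs_le.2 ⟨by linarith [(hDr (X ω)).2], by linarith [(hDr (X ω)).1]⟩)
      · rw [abs_of_pos (h1πpos (X ω))]; exact h1πc (X ω)
    exact ((bddmul b1 (1 / c) b1abs hσ₁L1).congr
        (Eventually.of_forall fun ω => by ring)).add
      ((bddmul b0 (1 / c) b0abs hσ₀L1).congr (Eventually.of_forall fun ω => by ring))
  -- variance congruence helper
  have hvcongr : ∀ {f g : Ω → ℝ}, MemLp f 2 P → MemLp g 2 P → f =ᵐ[P] g →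
      variance f P = variance g P := by
    intro f g hf hg hfg
    have h2 : f ^ 2 =ᵐ[P] g ^ 2 := hfg.mono fun ω e => by
      simp only [Pi.pow_apply]; rw [e]
    rw [variance_eq_sub hf, variance_eq_sub hg, integral_congr_ae h2, integral_congr_ae hfg]
  -- the claimed value of Dad
  have hVDad : (∫ ω, (Dad (X ω) * μ₁ (X ω) + (1 - Dad (X ω)) * μ₀ (X ω)) ∂P) = V₀ := by
    rw [hV₀]
    exact integral_congr_ae (Eventually.of_forall fun ω => hDad_h (X ω))
  refine ⟨?_, hVDad, ?_⟩
  · -- optimality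
    intro D hDm hDr hVD
    obtain ⟨hψDL2, hmeanD, hvarD⟩ := aipw_moments P X A Y hX hA hY hAbin hYL2 c ⟨hc0, hc2⟩
      π₁ hπ₁m hπ₁r hcondA μ₁ μ₀ hμ₁m hμ₀m hμ₁L2 hμ₀L2 hcond1 hcond0 σ₁sq σ₀sq hσ₁m hσ₀m
      hσ₁L1 hσ₀L1 hcondsq1 hcondsq0 D hDm hDr
    have hhDint : Integrable (fun ω => D (X ω) * μ₁ (X ω) + (1 - D (X ω)) * μ₀ (X ω)) P :=
      (hL2form D hDm hDr).integrable one_le_two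
    -- h_D(X) = max a.e.
    have hdiff : ∫ ω, (max (μ₁ (X ω)) (μ₀ (X ω))
        - (D (X ω) * μ₁ (X ω) + (1 - D (X ω)) * μ₀ (X ω))) ∂P = 0 := by
      rw [integral_sub hmaxint hhDint, hVD, hV₀, sub_self]
    have hnn : 0 ≤ᵐ[P] fun ω => max (μ₁ (X ω)) (μ₀ (X ω))
        - (D (X ω) * μ₁ (X ω) + (1 - D (X ω)) * μ₀ (X ω)) := by
      refine Eventually.of_forall fun ω => ?_
      simp only [Pi.zero_apply]
      have h1 := le_max_left (μ₁ (X ω)) (μ₀ (X ω))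
      have h2 := le_max_right (μ₁ (X ω)) (μ₀ (X ω))
      have h3 := (hDr (X ω)).1
      have h4 := (hDr (X ω)).2
      nlinarith [mul_nonneg h3 (sub_nonneg.mpr h1),
        mul_nonneg (by linarith : (0:ℝ) ≤ 1 - D (X ω)) (sub_nonneg.mpr h2)]
    have hzero : (fun ω => max (μ₁ (X ω)) (μ₀ (X ω))
        - (D (X ω) * μ₁ (X ω) + (1 - D (X ω)) * μ₀ (X ω))) =ᵐ[P] 0 :=
      (integral_eq_zero_iff_of_nonneg_ae hnn (hmaxint.sub hhDint)).mp hdiff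
    have hae : (fun ω => D (X ω) * μ₁ (X ω) + (1 - D (X ω)) * μ₀ (X ω))
        =ᵐ[P] fun ω => max (μ₁ (X ω)) (μ₀ (X ω)) := by
      filter_upwards [hzero] with ω e
      have : max (μ₁ (X ω)) (μ₀ (X ω))
          - (D (X ω) * μ₁ (X ω) + (1 - D (X ω)) * μ₀ (X ω)) = 0 := e
      linarith
    -- variance of the h-parts agree
    have hvh : variance (fun ω => D (X ω) * μ₁ (X ω) + (1 - D (X ω)) * μ₀ (X ω)) P
        = variance (fun ω => Dad (X ω) * μ₁ (X ω) + (1 - Dad (X ω)) * μ₀ (X ω)) P := by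
      refine hvcongr (hL2form D hDm hDr) (hL2form Dad hDadm hDadr) ?_
      filter_upwards [hae] with ω e
      rw [e, ← hDad_h (X ω)]
    -- a.e. pointwise inequality of the sigma parts
    have haele : (fun ω => σ₁sq (X ω) * Dad (X ω) ^ 2 / π₁ (X ω)
          + σ₀sq (X ω) * (1 - Dad (X ω)) ^ 2 / (1 - π₁ (X ω)))
        ≤ᵐ[P] fun ω => σ₁sq (X ω) * D (X ω) ^ 2 / π₁ (X ω)
          + σ₀sq (X ω) * (1 - D (X ω)) ^ 2 / (1 - π₁ (X ω)) := by
      filter_upwards [hs1, hs0, hσnn, hae] with ω e1 e0 hsnn ehd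
      rw [e1, e0]
      have hp := hπpos (X ω)
      have hp1 := h1πpos (X ω)
      rcases lt_trichotomy (μ₁ (X ω) - μ₀ (X ω)) 0 with h' | h' | h'
      · -- τ < 0 : D = 0 = Dad a.e.
        have hDad0 : Dad (X ω) = 0 := by
          rw [hDad (X ω), if_neg (by linarith), if_neg (by linarith)]; ring
        have hmax : max (μ₁ (X ω)) (μ₀ (X ω)) = μ₀ (X ω) := max_eq_right (by linarith)
        rw [hmax] at ehd
        have hD0' : D (X ω) * (μ₁ (X ω) - μ₀ (X ω)) = 0 := by linarith [ehd]
        have : D (X ω) = 0 := by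
          rcases mul_eq_zero.mp hD0' with h'' | h''
          · exact h''
          · exact absurd h'' (by linarith)
        rw [hDad0, this]
      · -- τ = 0 : quadratic minimum at π₁
        have hDadπ : Dad (X ω) = π₁ (X ω) := by
          rw [hDad (X ω), if_neg (by rw [h']; exact lt_irrefl 0), if_pos h']; ring
        rw [hDadπ]
        exact quad_min hsnn hp (by linarith)
      · -- τ > 0 : D = 1 = Dad a.e.
        have hDad1 : Dad (X ω) = 1 := by
          rw [hDad (X ω), if_pos h', if_neg (by linarith)]; ring
        have hmax : max (μ₁ (X ω)) (μ₀ (X ω)) = μ₁ (X ω) := max_eq_left (by linarith)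
        rw [hmax] at ehd
        have hD1' : (1 - D (X ω)) * (μ₁ (X ω) - μ₀ (X ω)) = 0 := by linarith [ehd]
        have : D (X ω) = 1 := by
          rcases mul_eq_zero.mp hD1' with h'' | h''
          · linarith
          · exact absurd h'' (by linarith)
        rw [hDad1, this]
    have hintle := integral_mono_ae (sint Dad hDadm hDadr) (sint D hDm hDr) haele
    rw [hvarad, hvarD, ← hvh]
    linarith
  · -- formula for the variance of the adaptive rule
    rw [hvarad]
    have hfun : (fun ω => Dad (X ω) * μ₁ (X ω) + (1 - Dad (X ω)) * μ₀ (X ω))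
        = fun ω => d₀ (X ω) * μ₁ (X ω) + (1 - d₀ (X ω)) * μ₀ (X ω) := by
      funext ω
      rw [hDad_h (X ω), hd₀_h (X ω)]
    -- split the sigma integral
    have hτ3 : ∀ x, 0 < μ₁ x - μ₀ x ∨ μ₁ x - μ₀ x = 0 ∨ μ₁ x - μ₀ x < 0 := by
      intro x
      rcases lt_trichotomy (μ₁ x - μ₀ x) 0 with h' | h' | h'
      · exact Or.inr (Or.inr h')
      · exact Or.inr (Or.inl h')
      · exact Or.inl h'
    have hR1m : Measurable (fun ω => (if 0 < μ₁ (X ω) - μ₀ (X ω) then (1 : ℝ) else 0) / π₁ (X ω)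
        + (if μ₁ (X ω) - μ₀ (X ω) < 0 then (1 : ℝ) else 0) / (1 - π₁ (X ω))) := by
      have hτX : Measurable fun ω => μ₁ (X ω) - μ₀ (X ω) := hτm.comp hX
      exact ((Measurable.ite (measurableSet_lt measurable_const hτX) measurable_const
          measurable_const).div (hπ₁m.comp hX)).add
        ((Measurable.ite (measurableSet_lt hτX measurable_const) measurable_const
          measurable_const).div (measurable_const.sub (hπ₁m.comp hX)))
    have hR1abs : ∀ ω, |(if 0 < μ₁ (X ω) - μ₀ (X ω) then (1 : ℝ) else 0) / π₁ (X ω)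
        + (if μ₁ (X ω) - μ₀ (X ω) < 0 then (1 : ℝ) else 0) / (1 - π₁ (X ω))| ≤ 1 / c + 1 / c := by
      intro ω
      have hp := hπpos (X ω)
      have hp1 := h1πpos (X ω)
      have hb1 : (1 : ℝ) / π₁ (X ω) ≤ 1 / c := one_div_le_one_div_of_le hc0 (hπc (X ω))
      have hb0 : (1 : ℝ) / (1 - π₁ (X ω)) ≤ 1 / c := one_div_le_one_div_of_le hc0 (h1πc (X ω))
      rcases lt_trichotomy (μ₁ (X ω) - μ₀ (X ω)) 0 with h' | h' | h'
      · rw [if_neg (by linarith), if_pos h', abs_of_nonneg (by positivity)]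
        rw [zero_div]
        have : (0 : ℝ) < 1 / c := by positivity
        linarith
      · rw [if_neg (by rw [h']; exact lt_irrefl 0), if_neg (by rw [h']; exact lt_irrefl 0),
          zero_div, zero_div, add_zero, abs_zero]
        positivity
      · rw [if_pos h', if_neg (by linarith), abs_of_nonneg (by positivity)]
        rw [zero_div]
        have : (0 : ℝ) < 1 / c := by positivity
        linarith
    have hR2m : Measurable (fun ω => (if μ₁ (X ω) - μ₀ (X ω) = 0 then (1 : ℝ) else 0)) :=
      Measurable.ite (measurableSet_eq_fun (hτm.comp hX) measurable_const) measurable_const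
        measurable_const
    have hR2abs : ∀ ω, |if μ₁ (X ω) - μ₀ (X ω) = 0 then (1 : ℝ) else 0| ≤ 1 := by
      intro ω; split <;> norm_num
    have hI1 : Integrable (fun ω => σsq (X ω)
        * ((if 0 < μ₁ (X ω) - μ₀ (X ω) then (1 : ℝ) else 0) / π₁ (X ω)
          + (if μ₁ (X ω) - μ₀ (X ω) < 0 then (1 : ℝ) else 0) / (1 - π₁ (X ω)))) P :=
      (bddmul hR1m.aestronglyMeasurable (1 / c + 1 / c) hR1abs hσXint).congr
        (Eventually.of_forall fun ω => by ring)
    have hI2 : Integrable (fun ω => σsq (X ω)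
        * (if μ₁ (X ω) - μ₀ (X ω) = 0 then (1 : ℝ) else 0)) P :=
      (bddmul hR2m.aestronglyMeasurable 1 hR2abs hσXint).congr
        (Eventually.of_forall fun ω => by ring)
    have hsplit : ∫ ω, (σ₁sq (X ω) * Dad (X ω) ^ 2 / π₁ (X ω)
          + σ₀sq (X ω) * (1 - Dad (X ω)) ^ 2 / (1 - π₁ (X ω))) ∂P
        = (∫ ω, σsq (X ω)
            * ((if 0 < μ₁ (X ω) - μ₀ (X ω) then (1 : ℝ) else 0) / π₁ (X ω)
              + (if μ₁ (X ω) - μ₀ (X ω) < 0 then (1 : ℝ) else 0) / (1 - π₁ (X ω))) ∂P)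
          + ∫ ω, σsq (X ω) * (if μ₁ (X ω) - μ₀ (X ω) = 0 then (1 : ℝ) else 0) ∂P := by
      rw [← integral_add hI1 hI2]
      refine integral_congr_ae ?_
      filter_upwards [hs1, hs0] with ω e1 e0
      rw [e1, e0, hDad (X ω)]
      have hp := (hπpos (X ω)).ne'
      have hp1 := (h1πpos (X ω)).ne'
      rcases lt_trichotomy (μ₁ (X ω) - μ₀ (X ω)) 0 with h' | h' | h'
      · have t1 : ¬ (0 < μ₁ (X ω) - μ₀ (X ω)) := by linarith
        have t2 : ¬ (μ₁ (X ω) - μ₀ (X ω) = 0) := by linarith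
        rw [if_neg t1, if_neg t2, if_pos h']
        ring
      · have t1 : ¬ (0 < μ₁ (X ω) - μ₀ (X ω)) := by rw [h']; exact lt_irrefl 0
        have t3 : ¬ (μ₁ (X ω) - μ₀ (X ω) < 0) := by rw [h']; exact lt_irrefl 0
        rw [if_neg t1, if_pos h', if_neg t3]
        field_simp
        ring
      · have t1 : ¬ (μ₁ (X ω) - μ₀ (X ω) < 0) := by linarith
        have t2 : ¬ (μ₁ (X ω) - μ₀ (X ω) = 0) := by linarith
        rw [if_pos h', if_neg t1, if_neg t2]
        ring
    rw [hfun, hsplit]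
    ring
end

section
/- Under the margin condition: (i) for every 0<h≤δ, E[|τ(X)|·1{0<|τ(X)|<h}] ≤ c̄·h^{1+α}; and (ii) for every 0<h≤δ and every measurable D:𝒳→[0,1] such that D(x) = 1{τ(x)>0} whenever |τ(x)| ≥ h, the value gap satisfies 0 ≤ V₀ − V(D) ≤ c̄·h^{1+α}. -/
open MeasureTheory ProbabilityTheory Filter Topology
open scoped Classical

/-- Under the margin condition `P(0 < |τ(X)| < t) ≤ c̄·t^α` for all
`0 < t ≤ δ` (with `τ = μ₁ − μ₀`):
(i) for every `0 < h ≤ δ`, `E[|τ(X)|·1{0<|τ(X)|<h}] ≤ c̄·h^{1+α}`; and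
(ii) for every `0 < h ≤ δ` and every measurable `D : 𝒳 → [0,1]` such that
`D(x) = 1{τ(x)>0}` whenever `|τ(x)| ≥ h`, the value gap satisfies
`0 ≤ V₀ − V(D) ≤ c̄·h^{1+α}`. -/
theorem stmt_17 {Ω 𝒳 : Type*} [MeasurableSpace Ω] [MeasurableSpace 𝒳]
    (P : Measure Ω) [IsProbabilityMeasure P]
    (X : Ω → 𝒳) (A Y : Ω → ℝ)
    (hX : Measurable X) (hA : Measurable A) (hY : Measurable Y)
    (hAbin : ∀ ω, A ω = 0 ∨ A ω = 1) (hYL2 : MemLp Y 2 P)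
    (c : ℝ) (hc : c ∈ Set.Ioo (0 : ℝ) (1 / 2))
    (π₁ : 𝒳 → ℝ) (hπ₁m : Measurable π₁) (hπ₁r : ∀ x, π₁ x ∈ Set.Icc c (1 - c))
    (hcondA : P[A | MeasurableSpace.comap X inferInstance]
      =ᵐ[P] fun ω => π₁ (X ω))
    (μ₁ μ₀ : 𝒳 → ℝ) (hμ₁m : Measurable μ₁) (hμ₀m : Measurable μ₀)
    (hμ₁L2 : MemLp (fun ω => μ₁ (X ω)) 2 P) (hμ₀L2 : MemLp (fun ω => μ₀ (X ω)) 2 P)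
    (hcond1 : P[fun ω => A ω * Y ω | MeasurableSpace.comap X inferInstance]
      =ᵐ[P] fun ω => μ₁ (X ω) * π₁ (X ω))
    (hcond0 : P[fun ω => (1 - A ω) * Y ω | MeasurableSpace.comap X inferInstance]
      =ᵐ[P] fun ω => μ₀ (X ω) * (1 - π₁ (X ω)))
    (cbar α δ : ℝ) (hcbar : 0 < cbar) (hα : 0 < α) (hδ : 0 < δ)
    (hmargin : ∀ t : ℝ, 0 < t → t ≤ δ →
      (P {ω | 0 < |μ₁ (X ω) - μ₀ (X ω)| ∧ |μ₁ (X ω) - μ₀ (X ω)| < t}).toReal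
        ≤ cbar * t ^ α)
    (V : (𝒳 → ℝ) → ℝ)
    (hV : ∀ D : 𝒳 → ℝ, V D = ∫ ω, (D (X ω) * μ₁ (X ω) + (1 - D (X ω)) * μ₀ (X ω)) ∂P)
    (V₀ : ℝ) (hV₀ : V₀ = ∫ ω, max (μ₁ (X ω)) (μ₀ (X ω)) ∂P) :
    (∀ h : ℝ, 0 < h → h ≤ δ →
      ∫ ω, |μ₁ (X ω) - μ₀ (X ω)|
          * (if 0 < |μ₁ (X ω) - μ₀ (X ω)| ∧ |μ₁ (X ω) - μ₀ (X ω)| < h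
              then (1 : ℝ) else 0) ∂P
        ≤ cbar * h ^ (1 + α)) ∧
    (∀ h : ℝ, 0 < h → h ≤ δ →
      ∀ D : 𝒳 → ℝ, Measurable D → (∀ x, D x ∈ Set.Icc (0 : ℝ) 1) →
        (∀ x, h ≤ |μ₁ x - μ₀ x| → D x = if 0 < μ₁ x - μ₀ x then (1 : ℝ) else 0) →
        0 ≤ V₀ - V D ∧ V₀ - V D ≤ cbar * h ^ (1 + α)) := by
  have hmeasτ : Measurable fun ω => μ₁ (X ω) - μ₀ (X ω) :=
    (hμ₁m.comp hX).sub (hμ₀m.comp hX)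
  have hI1 : Integrable (fun ω => μ₁ (X ω)) P := hμ₁L2.integrable one_le_two
  have hI0 : Integrable (fun ω => μ₀ (X ω)) P := hμ₀L2.integrable one_le_two
  have hIabs : Integrable (fun ω => |μ₁ (X ω) - μ₀ (X ω)|) P := (hI1.sub hI0).abs
  -- Part (i)
  have part1 : ∀ h : ℝ, 0 < h → h ≤ δ →
      ∫ ω, |μ₁ (X ω) - μ₀ (X ω)|
          * (if 0 < |μ₁ (X ω) - μ₀ (X ω)| ∧ |μ₁ (X ω) - μ₀ (X ω)| < h
              then (1 : ℝ) else 0) ∂P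
        ≤ cbar * h ^ (1 + α) := by
    intro h hh hhδ
    set S : Set Ω := {ω | 0 < |μ₁ (X ω) - μ₀ (X ω)| ∧ |μ₁ (X ω) - μ₀ (X ω)| < h} with hS
    have hSm : MeasurableSet S := by
      have : S = {ω | 0 < |μ₁ (X ω) - μ₀ (X ω)|} ∩ {ω | |μ₁ (X ω) - μ₀ (X ω)| < h} :=
        Set.setOf_and
      rw [this]
      exact (measurableSet_lt measurable_const hmeasτ.abs).inter
        (measurableSet_lt hmeasτ.abs measurable_const)
    have hfun : (fun ω => |μ₁ (X ω) - μ₀ (X ω)|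
          * (if 0 < |μ₁ (X ω) - μ₀ (X ω)| ∧ |μ₁ (X ω) - μ₀ (X ω)| < h
              then (1 : ℝ) else 0))
        = S.indicator (fun ω => |μ₁ (X ω) - μ₀ (X ω)|) := by
      funext ω
      by_cases hω : ω ∈ S
      · have hc' : (0 < |μ₁ (X ω) - μ₀ (X ω)| ∧ |μ₁ (X ω) - μ₀ (X ω)| < h) := hω
        rw [if_pos hc', mul_one, Set.indicator_of_mem hω]
      · have hc' : ¬ (0 < |μ₁ (X ω) - μ₀ (X ω)| ∧ |μ₁ (X ω) - μ₀ (X ω)| < h) := hω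
        rw [if_neg hc', mul_zero, Set.indicator_of_notMem hω]
    rw [hfun, integral_indicator hSm]
    have step1 : ∫ ω in S, |μ₁ (X ω) - μ₀ (X ω)| ∂P ≤ ∫ _ω in S, h ∂P := by
      refine setIntegral_mono_on hIabs.integrableOn (integrableOn_const ?_) hSm ?_
      · exact (measure_lt_top P S).ne
      · intro ω hω
        exact le_of_lt hω.2
    have step2 : ∫ _ω in S, h ∂P = (P S).toReal * h := by
      simp [setIntegral_const, measureReal_def]
    have step3 : (P S).toReal ≤ cbar * h ^ α := hmargin h hh hhδ
    have hpow : h ^ (1 + α) = h * h ^ α := by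
      rw [Real.rpow_add hh, Real.rpow_one]
    calc ∫ ω in S, |μ₁ (X ω) - μ₀ (X ω)| ∂P ≤ (P S).toReal * h := by
            rw [← step2]; exact step1
      _ ≤ (cbar * h ^ α) * h := by
            exact mul_le_mul_of_nonneg_right step3 hh.le
      _ = cbar * h ^ (1 + α) := by rw [hpow]; ring
  refine ⟨part1, ?_⟩
  intro h hh hhδ D hDm hDr hDopt
  have hIDμ₁ : Integrable (fun ω => D (X ω) * μ₁ (X ω)) P := by
    refine hI1.bdd_mul ((hDm.comp hX).aestronglyMeasurable) (c := 1) (Filter.Eventually.of_forall fun ω => ?_)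
    have := hDr (X ω)
    rw [Real.norm_eq_abs, abs_le]
    constructor <;> [linarith [this.1]; exact this.2]
  have hIDμ₀ : Integrable (fun ω => (1 - D (X ω)) * μ₀ (X ω)) P := by
    refine hI0.bdd_mul (((measurable_const.sub (hDm.comp hX))).aestronglyMeasurable)
      (c := 1) (Filter.Eventually.of_forall fun ω => ?_)
    have := hDr (X ω)
    rw [Real.norm_eq_abs, abs_le]
    constructor <;> [linarith [this.2]; linarith [this.1]]
  have hImax : Integrable (fun ω => max (μ₁ (X ω)) (μ₀ (X ω))) P := hI1.sup hI0
  have hdiff : V₀ - V D = ∫ ω, (max (μ₁ (X ω)) (μ₀ (X ω))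
      - (D (X ω) * μ₁ (X ω) + (1 - D (X ω)) * μ₀ (X ω))) ∂P := by
    have hIsum : Integrable (fun ω => D (X ω) * μ₁ (X ω)
        + (1 - D (X ω)) * μ₀ (X ω)) P := hIDμ₁.add hIDμ₀
    rw [hV₀, hV, ← integral_sub hImax hIsum]
  -- pointwise facts
  have hg0 : ∀ ω, 0 ≤ max (μ₁ (X ω)) (μ₀ (X ω))
      - (D (X ω) * μ₁ (X ω) + (1 - D (X ω)) * μ₀ (X ω)) := by
    intro ω
    have hd := hDr (X ω)
    rcases le_total (μ₀ (X ω)) (μ₁ (X ω)) with hle | hle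
    · rw [max_eq_left hle]; nlinarith [hd.1, hd.2]
    · rw [max_eq_right hle]; nlinarith [hd.1, hd.2]
  have hgle : ∀ ω, max (μ₁ (X ω)) (μ₀ (X ω))
      - (D (X ω) * μ₁ (X ω) + (1 - D (X ω)) * μ₀ (X ω))
      ≤ |μ₁ (X ω) - μ₀ (X ω)|
          * (if 0 < |μ₁ (X ω) - μ₀ (X ω)| ∧ |μ₁ (X ω) - μ₀ (X ω)| < h
              then (1 : ℝ) else 0) := by
    intro ω
    set x := X ω
    have hd := hDr x
    by_cases hbig : h ≤ |μ₁ x - μ₀ x|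
    · have hDx := hDopt x hbig
      have hrhs : 0 ≤ |μ₁ x - μ₀ x|
          * (if 0 < |μ₁ x - μ₀ x| ∧ |μ₁ x - μ₀ x| < h then (1 : ℝ) else 0) := by
        positivity
      by_cases hpos : 0 < μ₁ x - μ₀ x
      · rw [hDx]
        have : max (μ₁ x) (μ₀ x) = μ₁ x := max_eq_left (by linarith)
        simp only [if_pos hpos, this]
        nlinarith
      · rw [hDx]
        have : max (μ₁ x) (μ₀ x) = μ₀ x := max_eq_right (by linarith)
        simp only [if_neg hpos, this]
        nlinarith
    · push_neg at hbig
      by_cases hzero : μ₁ x = μ₀ x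
      · have : |μ₁ x - μ₀ x| = 0 := by rw [hzero]; simp
        simp only [this]
        rcases le_total (μ₀ x) (μ₁ x) with hle | hle
        · rw [max_eq_left hle]; nlinarith [hd.1, hd.2, abs_nonneg (μ₁ x - μ₀ x)]
        · rw [max_eq_right hle]; nlinarith [hd.1, hd.2]
      · have habs : 0 < |μ₁ x - μ₀ x| := abs_pos.2 (sub_ne_zero.2 hzero)
        rw [if_pos ⟨habs, hbig⟩, mul_one]
        rcases le_total (μ₀ x) (μ₁ x) with hle | hle
        · rw [max_eq_left hle, abs_of_nonneg (by linarith : (0:ℝ) ≤ μ₁ x - μ₀ x)]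
          nlinarith [hd.1, hd.2]
        · rw [max_eq_right hle, abs_of_nonpos (by linarith : μ₁ x - μ₀ x ≤ 0)]
          nlinarith [hd.1, hd.2]
  have hIf : Integrable (fun ω => |μ₁ (X ω) - μ₀ (X ω)|
      * (if 0 < |μ₁ (X ω) - μ₀ (X ω)| ∧ |μ₁ (X ω) - μ₀ (X ω)| < h
          then (1 : ℝ) else 0)) P := by
    refine Integrable.mono hIabs ?_ ?_
    · refine (hmeasτ.abs.mul ?_).aestronglyMeasurable
      refine Measurable.ite ?_ measurable_const measurable_const
      exact (measurableSet_lt measurable_const hmeasτ.abs).inter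
        (measurableSet_lt hmeasτ.abs measurable_const)
    · refine Filter.Eventually.of_forall fun ω => ?_
      rw [Real.norm_eq_abs, Real.norm_eq_abs, abs_abs, abs_mul, abs_abs]
      by_cases hc' : 0 < |μ₁ (X ω) - μ₀ (X ω)| ∧ |μ₁ (X ω) - μ₀ (X ω)| < h
      · rw [if_pos hc', abs_one, mul_one]
      · rw [if_neg hc', abs_zero, mul_zero]
        exact abs_nonneg _
  constructor
  · rw [hdiff]
    exact integral_nonneg hg0
  · rw [hdiff]
    calc ∫ ω, (max (μ₁ (X ω)) (μ₀ (X ω))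
        - (D (X ω) * μ₁ (X ω) + (1 - D (X ω)) * μ₀ (X ω))) ∂P
        ≤ ∫ ω, |μ₁ (X ω) - μ₀ (X ω)|
            * (if 0 < |μ₁ (X ω) - μ₀ (X ω)| ∧ |μ₁ (X ω) - μ₀ (X ω)| < h
                then (1 : ℝ) else 0) ∂P :=
          integral_mono (hImax.sub (hIDμ₁.add hIDμ₀)) hIf hgle
      _ ≤ cbar * h ^ (1 + α) := part1 h hh hhδ
end
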